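/- arXiv:1808.01046 — 7 statements merged into one kernel-verified Lean document; each statement's English description precedes it below -/
import Mathlib

section
/- Let I ⊆ ℚ[x_1,...,x_n] be an ideal. If I contains every element of E_{i,j}^n (elementary symmetric polynomials of degree i in all j-element subsets of the variables), then I contains every element of E_{i,j+k}^n for all k with 1 ≤ k ≤ n − j. -/
open MvPolynomial Finset

/-- The elementary symmetric polynomial `e_i(S)` in the set of variables `S ⊆ {x_1,...,x_n}`. -/
noncomputable def esymS (S : Finset ℕ) (i : ℕ) : MvPolynomial ℕ ℚ :=
  ∑ T ∈ S.powersetCard i, ∏ j ∈ T, X j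

lemma count_supersets (S T : Finset ℕ) (i j : ℕ) (hT : T ⊆ S) (hTi : T.card = i)
    (hij : i ≤ j) :
    ((S.powersetCard j).filter (fun S' => T ⊆ S')).card = (S.card - i).choose (j - i) := by
  rw [show S.card - i = (S \ T).card by rw [Finset.card_sdiff_of_subset hT, hTi],
    ← Finset.card_powersetCard]
  apply Finset.card_bij' (fun S' _ => S' \ T) (fun S'' _ => S'' ∪ T)
  · intro S' hS'
    simp only [Finset.mem_filter, Finset.mem_powersetCard] at hS' ⊢
    obtain ⟨⟨h1, h2⟩, h3⟩ := hS'
    refine ⟨Finset.sdiff_subset_sdiff h1 le_rfl, ?_⟩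
    rw [Finset.card_sdiff_of_subset h3, h2, hTi]
  · intro S'' hS''
    simp only [Finset.mem_filter, Finset.mem_powersetCard, Finset.mem_sdiff] at hS'' ⊢
    obtain ⟨h1, h2⟩ := hS''
    have hdisj : Disjoint S'' T := Finset.disjoint_left.2 fun a ha => (Finset.mem_sdiff.1 (h1 ha)).2
    refine ⟨⟨Finset.union_subset (fun a ha => (Finset.mem_sdiff.1 (h1 ha)).1) hT, ?_⟩, Finset.subset_union_right⟩
    rw [Finset.card_union_of_disjoint hdisj, h2, hTi, Nat.sub_add_cancel hij]
  · intro S' hS'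
    simp only [Finset.mem_filter] at hS'
    exact Finset.sdiff_union_of_subset hS'.2
  · intro S'' hS''
    simp only [Finset.mem_powersetCard, Finset.mem_sdiff] at hS''
    have hdisj : Disjoint S'' T := Finset.disjoint_left.2 fun a ha => (Finset.mem_sdiff.1 (hS''.1 ha)).2
    rw [Finset.union_sdiff_right, Finset.sdiff_eq_self_of_disjoint hdisj]

lemma sum_esymS (S : Finset ℕ) (i j : ℕ) (hij : i ≤ j) :
    ∑ S' ∈ S.powersetCard j, esymS S' i
      = ((S.card - i).choose (j - i)) • esymS S i := by
  unfold esymS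
  have key : ∀ S' ∈ S.powersetCard j,
      S'.powersetCard i = (S.powersetCard i).filter (fun T => T ⊆ S') := by
    intro S' hS'
    rw [Finset.mem_powersetCard] at hS'
    ext T
    simp only [Finset.mem_powersetCard, Finset.mem_filter]
    exact ⟨fun ⟨h1, h2⟩ => ⟨⟨h1.trans hS'.1, h2⟩, h1⟩, fun ⟨⟨_, h2⟩, h3⟩ => ⟨h3, h2⟩⟩
  rw [Finset.sum_congr rfl fun S' hS' => by rw [key S' hS']]
  rw [Finset.smul_sum]
  simp only [Finset.sum_filter]
  rw [Finset.sum_comm]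
  refine Finset.sum_congr rfl fun T hT => ?_
  rw [Finset.mem_powersetCard] at hT
  rw [← Finset.sum_filter, Finset.sum_const,
    count_supersets S T i j hT.1 hT.2 hij]

/-- If an ideal `I ⊆ ℚ[x_1,...,x_n]` contains every element of `E_{i,j}^n`, then it contains
every element of `E_{i,j+k}^n` for all `1 ≤ k ≤ n - j`. -/
theorem stmt2 (n i j : ℕ) (hij : i ≤ j) (hjn : j ≤ n)
    (I : Ideal (MvPolynomial ℕ ℚ))
    (hI : ∀ S : Finset ℕ, S ⊆ Finset.Icc 1 n → S.card = j → esymS S i ∈ I) :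
    ∀ k : ℕ, 1 ≤ k → k ≤ n - j →
      ∀ S : Finset ℕ, S ⊆ Finset.Icc 1 n → S.card = j + k → esymS S i ∈ I := by
  intro k _ _ S hSn hScard
  have hsum : ∑ S' ∈ S.powersetCard j, esymS S' i ∈ I := by
    apply Ideal.sum_mem
    intro S' hS'
    rw [Finset.mem_powersetCard] at hS'
    exact hI S' (hS'.1.trans hSn) hS'.2
  rw [sum_esymS S i j hij] at hsum
  set c : ℕ := ((S.card - i).choose (j - i)) with hc
  have hcpos : 0 < c := Nat.choose_pos (by omega)
  have hcne : ((c : ℚ)) ≠ 0 := by exact_mod_cast hcpos.ne'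
  have h2 : C ((c : ℚ)⁻¹) * (c • esymS S i) ∈ I := I.mul_mem_left _ hsum
  have h3 : C ((c : ℚ)⁻¹) * (c • esymS S i) = esymS S i := by
    rw [nsmul_eq_mul, ← mul_assoc]
    rw [show ((c : MvPolynomial ℕ ℚ)) = C ((c : ℚ)) by simp]
    rw [← C_mul, inv_mul_cancel₀ hcne, C_1, one_mul]
  rwa [h3] at h2
end

section
/- Let λ and λ' be partitions of n with λ ⊴ λ' in dominance order (λ_1 + ⋯ + λ_i ≤ λ'_1 + ⋯ + λ'_i for all i). Then the Garsia-Procesi basis satisfies B(λ') ⊆ B(λ). -/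
open MvPolynomial

/-- Delete the rightmost box of (0-indexed) row `i` of `l`, drop empty rows, and re-sort
into weakly decreasing order. -/
def gpStep (l : List ℕ) (i : ℕ) : List ℕ :=
  ((l.set i (l.getD i 0 - 1)).filter (fun x => x ≠ 0)).insertionSort (· ≥ ·)

/-- Auxiliary recursion for the Garsia-Procesi basis, with fuel equal to the number of boxes. -/
noncomputable def gpAux : ℕ → List ℕ → Set (MvPolynomial ℕ ℚ)
  | 0, _ => {1}
  | (n + 1), l => ⋃ i ∈ Finset.range l.length,
      (fun p => (X (n + 1) : MvPolynomial ℕ ℚ) ^ i * p) '' gpAux n (gpStep l i)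

/-- The Garsia-Procesi basis `B(λ)`: `B((1)) = {1}` and
`B(λ) = ⋃_{i=1}^k x_n^{i-1} B(λ_i)` where `λ_i` is `λ` with the rightmost box of row `i`
removed and rows re-sorted. -/
noncomputable def gpBasis (l : List ℕ) : Set (MvPolynomial ℕ ℚ) := gpAux l.sum l

/-- `l` is a partition of `n`: weakly decreasing, positive parts, total `n`. -/
def IsPartitionOf (n : ℕ) (l : List ℕ) : Prop :=
  l.Pairwise (· ≥ ·) ∧ (∀ x ∈ l, 0 < x) ∧ l.sum = n

/-! Auxiliary lemmas -/

lemma getD_anti {l : List ℕ} (hl : l.Pairwise (· ≥ ·)) {i j : ℕ} (h : i ≤ j) :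
    l.getD j 0 ≤ l.getD i 0 := by
  rcases lt_or_ge j l.length with hj | hj
  · have hi : i < l.length := lt_of_le_of_lt h hj
    rw [List.getD_eq_getElem l 0 hi, List.getD_eq_getElem l 0 hj]
    rcases eq_or_lt_of_le h with rfl | hlt
    · exact le_refl _
    · exact (List.pairwise_iff_getElem.mp hl) i j hi hj hlt
  · rw [List.getD_eq_default l 0 hj]
    exact Nat.zero_le _

lemma take_sum_succ (l : List ℕ) (t : ℕ) :
    (l.take (t + 1)).sum = (l.take t).sum + l.getD t 0 := by
  rw [List.take_succ, List.sum_append, List.getD_eq_getElem?_getD]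
  cases l[t]? <;> simp

lemma take_sum_of_le {l : List ℕ} {t : ℕ} (h : l.length ≤ t) : (l.take t).sum = l.sum := by
  rw [List.take_of_length_le h]

/-- counting in a `set`. -/
lemma perm_set_set (l : List ℕ) (i j v : ℕ) (hi : i < l.length) (hj : j < l.length)
    (h : l.getD i 0 = l.getD j 0) : (l.set i v).Perm (l.set j v) := by
  rw [List.perm_iff_count]
  intro x
  rw [List.count_set hi, List.count_set hj]
  rw [List.getD_eq_getElem l 0 hi, List.getD_eq_getElem l 0 hj] at h
  rw [h]

/-- setting an appropriate value keeps sortedness -/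
lemma sorted_set {l : List ℕ} (hl : l.Pairwise (· ≥ ·)) {j v : ℕ}
    (hub : v ≤ l.getD j 0) (hlb : l.getD (j + 1) 0 ≤ v) :
    (l.set j v).Pairwise (· ≥ ·) := by
  rw [List.pairwise_iff_getElem]
  intro p q hp hq hpq
  rw [List.length_set] at hp hq
  rw [List.getElem_set, List.getElem_set]
  have hpw := List.pairwise_iff_getElem.mp hl
  split_ifs with h1 h2 h2
  · omega
  · -- j = p, show l[q] ≤ v
    subst h1
    have u1 : l.getD q 0 ≤ l.getD (j + 1) 0 := getD_anti hl (by omega)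
    have u2 : l.getD q 0 = l[q] := List.getD_eq_getElem l 0 hq
    omega
  · -- j = q, show v ≤ l[p]
    subst h2
    have u1 : l.getD j 0 ≤ l.getD p 0 := getD_anti hl (by omega)
    have u2 : l.getD p 0 = l[p] := List.getD_eq_getElem l 0 hp
    omega
  · exact hpw p q hp hq hpq

/-- last occurrence of the value `l.getD i 0` in a sorted list -/
def lastOcc (l : List ℕ) (i : ℕ) : ℕ :=
  Nat.findGreatest (fun j => j < l.length ∧ l.getD i 0 = l.getD j 0) (l.length - 1)

section lastOcc
variable {l : List ℕ} {i : ℕ}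

lemma le_lastOcc (hi : i < l.length) : i ≤ lastOcc l i := by
  unfold lastOcc
  exact Nat.le_findGreatest (by omega) ⟨hi, rfl⟩

lemma lastOcc_lt (hi : i < l.length) : lastOcc l i < l.length := by
  unfold lastOcc
  exact lt_of_le_of_lt (Nat.findGreatest_le _) (by omega)

lemma getD_lastOcc (hi : i < l.length) : l.getD (lastOcc l i) 0 = l.getD i 0 := by
  unfold lastOcc
  exact (Nat.findGreatest_spec (P := fun j => j < l.length ∧ l.getD i 0 = l.getD j 0)
    (m := i) (by omega) ⟨hi, rfl⟩).2.symm

lemma getD_lastOcc_succ (hl : l.Pairwise (· ≥ ·)) (hi : i < l.length)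
    (ha : 0 < l.getD i 0) : l.getD (lastOcc l i + 1) 0 < l.getD i 0 := by
  rcases lt_or_ge (lastOcc l i + 1) l.length with h | h
  · have hne := Nat.findGreatest_is_greatest (k := lastOcc l i + 1)
      (P := fun j => j < l.length ∧ l.getD i 0 = l.getD j 0) (n := l.length - 1)
      (by unfold lastOcc; omega) (by omega)
    have h2 : l.getD (lastOcc l i + 1) 0 ≤ l.getD (lastOcc l i) 0 := getD_anti hl (by omega)
    rw [getD_lastOcc hi] at h2
    rcases eq_or_lt_of_le h2 with heq | hlt
    · exact absurd ⟨h, heq.symm⟩ hne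
    · exact hlt
  · rw [List.getD_eq_default l 0 h]
    exact ha

end lastOcc

lemma filter_pos_eq {l : List ℕ} (h : ∀ x ∈ l, 0 < x) :
    l.filter (fun x => x ≠ 0) = l := by
  rw [List.filter_eq_self]
  intro a ha
  simpa using (h a ha).ne'

/-- The structural description of `gpStep`: decrement the *last* occurrence. -/
lemma gpStep_eq {l : List ℕ} {i : ℕ} (hl : l.Pairwise (· ≥ ·)) (hpos : ∀ x ∈ l, 0 < x)
    (hi : i < l.length) :
    gpStep l i = (l.set (lastOcc l i) (l.getD i 0 - 1)).filter (fun x => x ≠ 0) := by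
  set a := l.getD i 0 with ha
  have hapos : 0 < a := by
    rw [ha, List.getD_eq_getElem l 0 hi]
    exact hpos _ (List.getElem_mem hi)
  refine (fun hp h1 h2 => List.Perm.eq_of_pairwise' (r := (· ≥ ·)) h1 h2 hp) ?_ ?_ ?_
  · refine (List.perm_insertionSort _ _).trans (List.Perm.filter _ ?_)
    exact perm_set_set l i (lastOcc l i) (a - 1) hi (lastOcc_lt hi) (getD_lastOcc hi).symm
  · exact List.pairwise_insertionSort _ _
  · refine List.Pairwise.filter _ (sorted_set hl ?_ ?_)
    · rw [getD_lastOcc hi]; omega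
    · have h2 := getD_lastOcc_succ hl hi hapos
      rw [← ha] at h2
      omega

lemma take_sum_set_of_le {l : List ℕ} {j v t : ℕ} (h : t ≤ j) :
    ((l.set j v).take t).sum = (l.take t).sum := by
  induction t with
  | zero => simp
  | succ t ih =>
    rw [take_sum_succ, take_sum_succ, ih (by omega)]
    congr 1
    rw [List.getD_eq_getElem?_getD, List.getD_eq_getElem?_getD, List.getElem?_set,
      if_neg (by omega : ¬ j = t)]

lemma take_sum_set_of_gt {l : List ℕ} {j v t : ℕ} (hj : j < l.length) (h : j < t) :
    ((l.set j v).take t).sum + l.getD j 0 = (l.take t).sum + v := by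
  induction t with
  | zero => omega
  | succ t ih =>
    rcases Nat.lt_or_ge j t with hlt | hge
    · rw [take_sum_succ, take_sum_succ]
      have hgd : (l.set j v).getD t 0 = l.getD t 0 := by
        rw [List.getD_eq_getElem?_getD, List.getD_eq_getElem?_getD, List.getElem?_set,
          if_neg (by omega : ¬ j = t)]
      rw [hgd]
      have := ih hlt
      omega
    · have hjt : j = t := by omega
      subst hjt
      rw [take_sum_succ, take_sum_succ, take_sum_set_of_le (le_refl j)]
      have hgd : (l.set j v).getD j 0 = v := by
        rw [List.getD_eq_getElem?_getD, List.getElem?_set, if_pos rfl, if_pos hj]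
        rfl
      rw [hgd]
      omega

/-- Take-sums of `gpStep`. -/
lemma gpStep_take_sum {l : List ℕ} {i : ℕ} (hl : l.Pairwise (· ≥ ·)) (hpos : ∀ x ∈ l, 0 < x)
    (hi : i < l.length) (t : ℕ) :
    (t ≤ lastOcc l i → ((gpStep l i).take t).sum = (l.take t).sum) ∧
    (lastOcc l i < t → ((gpStep l i).take t).sum + 1 = (l.take t).sum) := by
  set a := l.getD i 0 with ha
  set j := lastOcc l i with hj
  have hjlt : j < l.length := lastOcc_lt hi
  have hja : l.getD j 0 = a := getD_lastOcc hi
  have hapos : 0 < a := by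
    rw [ha, List.getD_eq_getElem l 0 hi]
    exact hpos _ (List.getElem_mem hi)
  rw [gpStep_eq hl hpos hi, ← ha, ← hj]
  rcases Nat.lt_or_ge 1 a with h2 | h2
  · -- a ≥ 2 : the filter does nothing
    have hfil : (l.set j (a - 1)).filter (fun x => x ≠ 0) = l.set j (a - 1) := by
      apply filter_pos_eq
      intro x hx
      rcases List.mem_or_eq_of_mem_set hx with hx | rfl
      · exact hpos x hx
      · omega
    rw [hfil]
    constructor
    · intro hle; exact take_sum_set_of_le hle
    · intro hlt
      have := take_sum_set_of_gt (v := a - 1) hjlt hlt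
      omega
  · -- a = 1 : j is the final index and the new 0 gets filtered away
    have ha1 : a = 1 := by omega
    have hjlast : j + 1 = l.length := by
      rcases Nat.lt_or_ge (j + 1) l.length with hcon | hge
      · have h1 := getD_lastOcc_succ hl hi hapos
        rw [← ha, ← hj] at h1
        have h2 : 0 < l.getD (j + 1) 0 := by
          rw [List.getD_eq_getElem l 0 hcon]
          exact hpos _ (List.getElem_mem hcon)
        omega
      · omega
    have hset : l.set j (a - 1) = l.take j ++ [0] := by
      rw [ha1]
      rw [List.set_eq_take_cons_drop _ hjlt]
      congr 1
      rw [show j + 1 = l.length from hjlast, List.drop_length]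
    have hfil : (l.set j (a - 1)).filter (fun x => x ≠ 0) = l.take j := by
      rw [hset, List.filter_append]
      rw [filter_pos_eq (fun x hx => hpos x (List.mem_of_mem_take hx))]
      simp
    rw [hfil]
    constructor
    · intro hle
      rw [List.take_take, min_eq_left hle]
    · intro hlt
      have hlen : (l.take j).length = j := by
        rw [List.length_take]; omega
      have h1 : ((l.take j).take t).sum = (l.take j).sum := take_sum_of_le (by omega)
      have h2 : (l.take (j+1)).sum = (l.take j).sum + 1 := by
        rw [take_sum_succ, hja, ha1]
      have h3 : (l.take t).sum = (l.take (j+1)).sum := by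
        rw [take_sum_of_le (by omega), take_sum_of_le (by omega)]
      omega

lemma gpStep_sorted (l : List ℕ) (i : ℕ) : (gpStep l i).Pairwise (· ≥ ·) :=
  List.pairwise_insertionSort _ _

lemma gpStep_pos (l : List ℕ) (i : ℕ) : ∀ x ∈ gpStep l i, 0 < x := by
  intro x hx
  rw [gpStep, (List.perm_insertionSort _ _).mem_iff, List.mem_filter] at hx
  have := hx.2
  simp only [ne_eq, decide_not, Bool.not_eq_true', decide_eq_false_iff_not] at this
  omega

lemma gpStep_sum {l : List ℕ} {i : ℕ} (hl : l.Pairwise (· ≥ ·)) (hpos : ∀ x ∈ l, 0 < x)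
    (hi : i < l.length) : (gpStep l i).sum + 1 = l.sum := by
  have hlen : (gpStep l i).length ≤ l.length := by
    rw [gpStep, (List.perm_insertionSort _ _).length_eq]
    calc ((l.set i (l.getD i 0 - 1)).filter _).length
        ≤ (l.set i (l.getD i 0 - 1)).length := List.length_filter_le _ _
      _ = l.length := List.length_set ..
  have := (gpStep_take_sum hl hpos hi l.length).2 (lastOcc_lt hi)
  rw [take_sum_of_le (le_refl _), take_sum_of_le hlen] at this
  exact this

/-- taking constant values: lower bound on a take-sum segment -/
lemma take_sum_ge_of_ge {l : List ℕ} {a i : ℕ} :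
    ∀ t, i ≤ t → (∀ s, i ≤ s → s < t → a ≤ l.getD s 0) →
      (l.take i).sum + (t - i) * a ≤ (l.take t).sum := by
  intro t
  induction t with
  | zero =>
    intro h _
    have : i = 0 := by omega
    subst this; simp
  | succ t ih =>
    intro h hs
    rcases Nat.lt_or_ge i (t+1) with hlt | hge
    · have hit : i ≤ t := by omega
      have h1 := ih hit (fun s h1 h2 => hs s h1 (by omega))
      have h2 := hs t hit (by omega)
      rw [take_sum_succ]
      have : (t + 1 - i) * a = (t - i) * a + a := by
        rw [show t + 1 - i = (t - i) + 1 from by omega, Nat.succ_mul]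
      omega
    · have : i = t + 1 := by omega
      subst this; simp

lemma take_sum_le_of_le {l : List ℕ} {a i : ℕ} :
    ∀ t, i ≤ t → (∀ s, i ≤ s → s < t → l.getD s 0 ≤ a) →
      (l.take t).sum ≤ (l.take i).sum + (t - i) * a := by
  intro t
  induction t with
  | zero =>
    intro h _
    have : i = 0 := by omega
    subst this; simp
  | succ t ih =>
    intro h hs
    rcases Nat.lt_or_ge i (t+1) with hlt | hge
    · have hit : i ≤ t := by omega
      have h1 := ih hit (fun s h1 h2 => hs s h1 (by omega))
      have h2 := hs t hit (by omega)
      rw [take_sum_succ]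
      have : (t + 1 - i) * a = (t - i) * a + a := by
        rw [show t + 1 - i = (t - i) + 1 from by omega, Nat.succ_mul]
      omega
    · have : i = t + 1 := by omega
      subst this; simp

/-- The hard case of dominance preservation. -/
lemma dom_hard {l l' : List ℕ} {i t : ℕ}
    (hl : l.Pairwise (· ≥ ·)) (hlpos : ∀ x ∈ l, 0 < x)
    (hl' : l'.Pairwise (· ≥ ·)) (hlpos' : ∀ x ∈ l', 0 < x)
    (hi : i < l.length) (hi' : i < l'.length)
    (hdom : ∀ s, (l.take s).sum ≤ (l'.take s).sum)
    (h2 : lastOcc l' i < t) (h1 : t ≤ lastOcc l i) :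
    (l.take t).sum < (l'.take t).sum := by
  set a := l.getD i 0 with ha
  set b := l'.getD i 0 with hb
  have hapos : 0 < a := by
    rw [ha, List.getD_eq_getElem l 0 hi]; exact hlpos _ (List.getElem_mem hi)
  have hbpos : 0 < b := by
    rw [hb, List.getD_eq_getElem l' 0 hi']; exact hlpos' _ (List.getElem_mem hi')
  have hij' : i ≤ lastOcc l' i := le_lastOcc hi'
  have hit : i < t := by omega
  -- all entries of l between i and lastOcc l i equal a
  have hat : ∀ s, i ≤ s → s ≤ lastOcc l i → l.getD s 0 = a := by
    intro s hs1 hs2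
    have u1 : l.getD s 0 ≤ a := getD_anti hl hs1
    have u2 : a ≤ l.getD s 0 := by
      have := getD_anti hl hs2
      rw [getD_lastOcc hi] at this
      exact this
    omega
  by_contra hcon
  have heq : (l.take t).sum = (l'.take t).sum := le_antisymm (hdom t) (by omega)
  -- step to t+1 to get a ≤ l'_t
  have hstep : a ≤ l'.getD t 0 := by
    have hd := hdom (t + 1)
    rw [take_sum_succ l t, take_sum_succ l' t, hat t (by omega) h1] at hd
    omega
  -- l'_t < b
  have hlt : l'.getD t 0 < b := by
    have u1 : l'.getD t 0 ≤ l'.getD (lastOcc l' i + 1) 0 := getD_anti hl' (by omega)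
    have u2 := getD_lastOcc_succ hl' hi' hbpos
    omega
  have hab : a < b := by omega
  -- S l t = S l i + (t - i) * a
  have hSl : (l.take t).sum = (l.take i).sum + (t - i) * a := by
    have u1 := take_sum_ge_of_ge (l := l) (a := a) (i := i) t (le_of_lt hit)
      (fun s hs1 hs2 => le_of_eq (hat s hs1 (by omega)).symm)
    have u2 := take_sum_le_of_le (l := l) (a := a) (i := i) t (le_of_lt hit)
      (fun s hs1 hs2 => le_of_eq (hat s hs1 (by omega)))
    omega
  -- S l' t ≥ S l' (i+1) + (t - i - 1) * a
  have hSl' : (l'.take (i+1)).sum + (t - (i+1)) * a ≤ (l'.take t).sum := by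
    refine take_sum_ge_of_ge (a := a) (i := i + 1) t (by omega) ?_
    intro s hs1 hs2
    have hu : l'.getD t 0 ≤ l'.getD s 0 := getD_anti hl' (le_of_lt hs2)
    omega
  have hSi1 : (l'.take (i+1)).sum = (l'.take i).sum + b := by
    rw [take_sum_succ, hb]
  have hSi : (l.take i).sum ≤ (l'.take i).sum := hdom i
  have hsplit : (t - i) * a = (t - (i + 1)) * a + a := by
    rw [show t - i = (t - (i+1)) + 1 from by omega, Nat.succ_mul]
  omega

/-- Dominance is preserved by removing a box from (sorted) row `i` of both partitions. -/
lemma dom_step {l l' : List ℕ} {i : ℕ}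
    (hl : l.Pairwise (· ≥ ·)) (hlpos : ∀ x ∈ l, 0 < x)
    (hl' : l'.Pairwise (· ≥ ·)) (hlpos' : ∀ x ∈ l', 0 < x)
    (hi : i < l.length) (hi' : i < l'.length)
    (hdom : ∀ s, (l.take s).sum ≤ (l'.take s).sum) (t : ℕ) :
    ((gpStep l i).take t).sum ≤ ((gpStep l' i).take t).sum := by
  have Hl := gpStep_take_sum hl hlpos hi t
  have Hl' := gpStep_take_sum hl' hlpos' hi' t
  rcases le_or_gt t (lastOcc l i) with h1 | h1 <;>
    rcases le_or_gt t (lastOcc l' i) with h2 | h2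
  · rw [Hl.1 h1, Hl'.1 h2]; exact hdom t
  · -- hard case
    have := dom_hard hl hlpos hl' hlpos' hi hi' hdom h2 h1
    have u1 := Hl.1 h1
    have u2 := Hl'.2 h2
    omega
  · have u1 := Hl.2 h1
    have u2 := Hl'.1 h2
    have := hdom t
    omega
  · have u1 := Hl.2 h1
    have u2 := Hl'.2 h2
    have := hdom t
    omega

lemma length_le_of_dom {l l' : List ℕ} (hlpos' : ∀ x ∈ l', 0 < x)
    (hsum : l.sum = l'.sum)
    (hdom : ∀ s, (l.take s).sum ≤ (l'.take s).sum) : l'.length ≤ l.length := by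
  by_contra hcon
  push_neg at hcon
  have h1 : (l.take l.length).sum = l.sum := take_sum_of_le (le_refl _)
  have h2 : (l'.take l.length).sum + (l'.drop l.length).sum = l'.sum :=
    List.sum_take_add_sum_drop _ _
  have h3 : 0 < (l'.drop l.length).sum := by
    have hne : l'.drop l.length ≠ [] := by
      intro h
      have := List.drop_eq_nil_iff.mp h
      omega
    obtain ⟨x, hx⟩ := List.exists_mem_of_ne_nil _ hne
    have hxl : x ∈ l' := List.mem_of_mem_drop hx
    have := hlpos' x hxl
    calc 0 < x := this
      _ ≤ (l'.drop l.length).sum := List.le_sum_of_mem hx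
  have := hdom l.length
  omega

/-- Main induction. -/
lemma gpAux_subset_of_dom : ∀ n (l l' : List ℕ), IsPartitionOf n l → IsPartitionOf n l' →
    (∀ s, (l.take s).sum ≤ (l'.take s).sum) → gpAux n l' ⊆ gpAux n l := by
  intro n
  induction n with
  | zero => intro l l' _ _ _; simp [gpAux]
  | succ n ih =>
    rintro l l' ⟨hls, hlp, hlsum⟩ ⟨hls', hlp', hlsum'⟩ hdom x hx
    simp only [gpAux, Set.mem_iUnion, Finset.mem_range] at hx ⊢
    obtain ⟨i, hi, p, hp, rfl⟩ := hx
    have hlen : l'.length ≤ l.length := length_le_of_dom hlp' (by omega) hdom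
    have hil : i < l.length := by omega
    refine ⟨i, by omega, p, ?_, rfl⟩
    refine ih (gpStep l i) (gpStep l' i) ?_ ?_ ?_ hp
    · exact ⟨gpStep_sorted l i, gpStep_pos l i, by have := gpStep_sum hls hlp hil; omega⟩
    · exact ⟨gpStep_sorted l' i, gpStep_pos l' i, by have := gpStep_sum hls' hlp' hi; omega⟩
    · exact dom_step hls hlp hls' hlp' hil hi hdom

/-- If `λ ⊴ λ'` in dominance order then `B(λ') ⊆ B(λ)`. -/
theorem stmt6 (n : ℕ) (l l' : List ℕ)
    (hl : IsPartitionOf n l) (hl' : IsPartitionOf n l')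
    (hdom : ∀ i : ℕ, (l.take i).sum ≤ (l'.take i).sum) :
    gpBasis l' ⊆ gpBasis l := by
  have h1 : l.sum = n := hl.2.2
  have h2 : l'.sum = n := hl'.2.2
  rw [gpBasis, gpBasis, h1, h2]
  exact gpAux_subset_of_dom n l l' hl hl' hdom
end

section
/- If λ ⊆ λ' are Young diagrams (λ a partition of m, λ' a partition of n, m ≤ n, with λ contained in λ' as diagrams), then B(λ) ⊆ B(λ'). -/
open MvPolynomial

namespace GP

/-- value of row `i` (0 beyond the end) -/
def val (l : List ℕ) (i : ℕ) : ℕ := l.getD i 0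

/-- prefix sum of the first `k` rows -/
def psum (l : List ℕ) (k : ℕ) : ℕ := (l.take k).sum

lemma psum_zero (l : List ℕ) : psum l 0 = 0 := rfl

lemma psum_succ (l : List ℕ) (k : ℕ) : psum l (k+1) = psum l k + val l k := by
  unfold psum val
  rw [List.take_succ, List.sum_append]
  congr 1
  rcases lt_or_ge k l.length with h | h
  · simp [List.getElem?_eq_getElem h, List.getD_eq_getElem _ _ h]
  · simp [List.getElem?_eq_none h, List.getD_eq_default _ _ h]

lemma psum_mono (l : List ℕ) {k k' : ℕ} (h : k ≤ k') : psum l k ≤ psum l k' := by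
  induction k', (h : k ≤ k') using Nat.le_induction with
  | base => exact le_refl _
  | succ n hn ih => exact le_trans ih (by rw [psum_succ]; omega)

lemma psum_of_len_le (l : List ℕ) {k : ℕ} (h : l.length ≤ k) : psum l k = l.sum := by
  unfold psum; rw [List.take_of_length_le h]

lemma val_of_len_le (l : List ℕ) {i : ℕ} (h : l.length ≤ i) : val l i = 0 :=
  List.getD_eq_default _ _ h

lemma val_pos (l : List ℕ) (hp : ∀ x ∈ l, 0 < x) {i : ℕ} (h : i < l.length) : 0 < val l i := by
  unfold val
  rw [List.getD_eq_getElem _ _ h]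
  exact hp _ (List.getElem_mem h)

lemma lt_len_of_val_pos (l : List ℕ) {i : ℕ} (h : 0 < val l i) : i < l.length := by
  by_contra hc
  rw [val_of_len_le l (by omega)] at h
  omega

lemma val_anti (l : List ℕ) (hs : l.Pairwise (· ≥ ·)) {i j : ℕ} (h : i ≤ j) :
    val l j ≤ val l i := by
  rcases lt_or_ge j l.length with hj | hj
  · have hi : i < l.length := lt_of_le_of_lt h hj
    unfold val
    rw [List.getD_eq_getElem _ _ hj, List.getD_eq_getElem _ _ hi]
    rcases eq_or_lt_of_le h with rfl | hlt
    · exact le_refl _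
    · exact List.pairwise_iff_getElem.mp hs i j hi hj hlt
  · rw [val_of_len_le l hj]; omega

lemma psum_lt_sum (l : List ℕ) (hp : ∀ x ∈ l, 0 < x) {i : ℕ} (h : i < l.length) :
    psum l i < l.sum := by
  have h1 : psum l i < psum l (i+1) := by rw [psum_succ]; have := val_pos l hp h; omega
  have h2 : psum l (i+1) ≤ psum l l.length := psum_mono l (by omega)
  rw [psum_of_len_le l (le_refl _)] at h2
  omega

lemma lt_len_of_psum_lt (l : List ℕ) {i : ℕ} (h : psum l i < l.sum) : i < l.length := by
  by_contra hc
  rw [psum_of_len_le l (by omega)] at h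
  omega

lemma psum_block_exact (l : List ℕ) (a t c : ℕ)
    (h : ∀ j, a ≤ j → j < a + t → val l j = c) :
    psum l (a + t) = psum l a + t * c := by
  induction t with
  | zero => simp
  | succ n ih =>
      rw [show a + (n+1) = (a+n)+1 by ring, psum_succ, ih (fun j h1 h2 => h j h1 (by omega)),
        h (a+n) (by omega) (by omega)]
      ring

lemma psum_block_lower (l : List ℕ) (a t c : ℕ)
    (h : ∀ j, a ≤ j → j < a + t → c ≤ val l j) :
    psum l a + t * c ≤ psum l (a + t) := by
  induction t with
  | zero => simp
  | succ n ih =>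
      rw [show a + (n+1) = (a+n)+1 by ring, psum_succ]
      have := ih (fun j h1 h2 => h j h1 (by omega))
      have := h (a+n) (by omega) (by omega)
      nlinarith

/-- the last index of the block of `l` containing index `i` -/
lemma exists_block (l : List ℕ) (hs : l.Pairwise (· ≥ ·)) (hp : ∀ x ∈ l, 0 < x)
    {i : ℕ} (hi : i < l.length) :
    ∃ b, i ≤ b ∧ b < l.length ∧ (∀ j, i ≤ j → j ≤ b → val l j = val l i) ∧
      (∀ j, b < j → val l j < val l i) := by
  set c := val l i with hc
  have hcpos : 0 < c := val_pos l hp hi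
  set S := (Finset.range l.length).filter (fun j => c ≤ val l j) with hS
  have hiS : i ∈ S := by
    rw [hS, Finset.mem_filter, Finset.mem_range]
    exact ⟨hi, le_refl _⟩
  have hne : S.Nonempty := ⟨i, hiS⟩
  refine ⟨S.max' hne, S.le_max' i hiS, ?_, ?_, ?_⟩
  · have hmm := S.max'_mem hne
    simp only [hS, Finset.mem_filter, Finset.mem_range] at hmm
    exact hmm.1
  · intro j h1 h2
    have hb := S.max'_mem hne
    simp only [hS, Finset.mem_filter, Finset.mem_range] at hb
    have h3 : c ≤ val l (S.max' hne) := hb.2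
    have h4 : val l (S.max' hne) ≤ val l j := val_anti l hs h2
    have h5 : val l j ≤ val l i := val_anti l hs h1
    omega
  · intro j hj
    by_contra hcon
    push_neg at hcon
    have hjlen : j < l.length := lt_len_of_val_pos l (by omega)
    have : j ∈ S := by
      rw [hS, Finset.mem_filter, Finset.mem_range]
      exact ⟨hjlen, hcon⟩
    have := S.le_max' j this
    omega


lemma psum_append (xs ys : List ℕ) (k : ℕ) :
    psum (xs ++ ys) k = psum xs k + psum ys (k - xs.length) := by
  unfold psum
  rw [List.take_append, List.sum_append]

lemma psum_nil (k : ℕ) : psum [] k = 0 := by unfold psum; simp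

lemma psum_cons (x : ℕ) (xs : List ℕ) (s : ℕ) :
    psum (x :: xs) (s+1) = x + psum xs s := by
  unfold psum; rw [List.take_succ_cons, List.sum_cons]

lemma mem_take_char (l : List ℕ) (b : ℕ) (x : ℕ) (hx : x ∈ l.take b) :
    ∃ j, j < b ∧ j < l.length ∧ val l j = x := by
  rw [List.mem_iff_getElem] at hx
  obtain ⟨n, hn, hval⟩ := hx
  rw [List.length_take] at hn
  have h1 : n < b := lt_of_lt_of_le hn (min_le_left _ _)
  have h2 : n < l.length := lt_of_lt_of_le hn (min_le_right _ _)
  refine ⟨n, h1, h2, ?_⟩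
  rw [← hval, List.getElem_take, val, List.getD_eq_getElem _ _ h2]

lemma mem_drop_char (l : List ℕ) (b : ℕ) (x : ℕ) (hx : x ∈ l.drop b) :
    ∃ j, b ≤ j ∧ j < l.length ∧ val l j = x := by
  rw [List.mem_iff_getElem] at hx
  obtain ⟨n, hn, hval⟩ := hx
  rw [List.length_drop] at hn
  refine ⟨b + n, by omega, by omega, ?_⟩
  rw [← hval, List.getElem_drop, val, List.getD_eq_getElem _ _ (by omega)]

/-- Main structure theorem for `gpStep`. -/
lemma step_spec (l : List ℕ) (hs : l.Pairwise (· ≥ ·)) (hp : ∀ x ∈ l, 0 < x)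
    {i : ℕ} (hi : i < l.length) :
    ∃ b, i ≤ b ∧ b < l.length ∧
      (∀ j, i ≤ j → j ≤ b → val l j = val l i) ∧
      (∀ j, b < j → val l j < val l i) ∧
      (gpStep l i).Pairwise (· ≥ ·) ∧ (∀ x ∈ gpStep l i, 0 < x) ∧
      (gpStep l i).sum + 1 = l.sum ∧
      (∀ k, psum (gpStep l i) k + (if b < k then 1 else 0) = psum l k) := by
  obtain ⟨b, hib, hblen, hblock, hafter⟩ := exists_block l hs hp hi
  set c := val l i with hc
  have hcpos : 0 < c := val_pos l hp hi
  have hvb : val l b = c := hblock b hib (le_refl _)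
  set M : List ℕ := if c = 1 then [] else [c-1] with hM
  set D : List ℕ := l.drop (b+1) with hD
  set T : List ℕ := l.take b with hT
  set E : List ℕ := T ++ (M ++ D) with hE
  -- characterizations of elements
  have hTchar : ∀ x ∈ T, c ≤ x := by
    intro x hx
    obtain ⟨j, hj1, hj2, hj3⟩ := mem_take_char l b x hx
    have := val_anti l hs (le_of_lt hj1)
    omega
  have hDchar : ∀ x ∈ D, x < c := by
    intro x hx
    obtain ⟨j, hj1, hj2, hj3⟩ := mem_drop_char l (b+1) x hx
    have := hafter j (by omega)
    omega
  have hDpos : ∀ x ∈ D, 0 < x := fun x hx => by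
    obtain ⟨j, _, hj2, hj3⟩ := mem_drop_char l (b+1) x hx
    have := val_pos l hp hj2; omega
  have hMchar : ∀ x ∈ M, x = c - 1 := by
    intro x hx
    rw [hM] at hx
    split at hx
    · simp at hx
    · simp at hx; omega
  -- decomposition of drop i
  have hd1 : l.drop i = List.replicate (b+1-i) c ++ l.drop (b+1) := by
    conv_lhs => rw [← List.take_append_drop (b+1-i) (l.drop i)]
    congr 1
    · rw [List.eq_replicate_iff]
      constructor
      · rw [List.length_take, List.length_drop]; omega
      · intro x hx
        have hx' : x ∈ l.drop i := List.mem_of_mem_take hx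
        rw [List.mem_iff_getElem] at hx
        obtain ⟨n, hn, hval⟩ := hx
        rw [List.length_take, List.length_drop] at hn
        have hnb : n < b + 1 - i := lt_of_lt_of_le hn (min_le_left _ _)
        have h2 : i + n < l.length := by omega
        rw [List.getElem_take, List.getElem_drop] at hval
        have := hblock (i+n) (by omega) (by omega)
        rw [val, List.getD_eq_getElem _ _ h2] at this
        omega
    · rw [List.drop_drop]
      congr 1
      omega
  have hd2 : l.drop (i+1) = List.replicate (b-i) c ++ D := by
    have : l.drop (i+1) = List.drop 1 (l.drop i) := by
      rw [List.drop_drop]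
    rw [this, hd1]
    rw [show b+1-i = (b-i)+1 by omega, List.replicate_succ]
    simp [hD]
  have ht1 : l.take b = l.take i ++ List.replicate (b-i) c := by
    conv_lhs => rw [show b = i + (b-i) by omega, List.take_add]
    congr 1
    rw [hd1, List.take_append, List.take_replicate, List.length_replicate,
      show b - i - (b+1-i) = 0 by omega]
    simp [show (b-i) ⊓ (b+1-i) = b - i by omega]
  -- the filtered list
  have hfilter : (l.set i (c - 1)).filter (fun x => x ≠ 0) =
      l.take i ++ (M ++ (List.replicate (b-i) c ++ D)) := by
    rw [List.set_eq_take_append_cons_drop, if_pos hi, List.filter_append, List.filter_cons]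
    have h1 : (l.take i).filter (fun x => x ≠ 0) = l.take i := by
      rw [List.filter_eq_self]
      intro a ha
      have : a ∈ l := List.mem_of_mem_take ha
      have := hp a this
      simp only [ne_eq, decide_not, Bool.not_eq_true', decide_eq_false_iff_not]
      omega
    have h2 : (l.drop (i+1)).filter (fun x => x ≠ 0) = l.drop (i+1) := by
      rw [List.filter_eq_self]
      intro a ha
      have : a ∈ l := List.mem_of_mem_drop ha
      have := hp a this
      simp only [ne_eq, decide_not, Bool.not_eq_true', decide_eq_false_iff_not]
      omega
    rw [h1, h2, hd2]
    congr 1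
    by_cases hc1 : c = 1
    · have : (decide ¬ (c - 1) = 0) = false := by simp [hc1]
      simp only [this, hM, if_pos hc1]
      simp
    · have : (decide ¬ (c - 1) = 0) = true := by simp; omega
      simp only [this, hM, if_neg hc1]
      simp
  -- E is the result
  have hperm : List.Perm ((l.set i (c-1)).filter (fun x => x ≠ 0)) E := by
    rw [hfilter, hE, hT, ht1, List.append_assoc]
    refine List.Perm.append_left (l.take i) ?_
    have hpc : List.Perm ((M ++ List.replicate (b-i) c) ++ D)
        ((List.replicate (b-i) c ++ M) ++ D) :=
      List.Perm.append_right D List.perm_append_comm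
    simpa [List.append_assoc] using hpc
  have hEsorted : E.Pairwise (· ≥ ·) := by
    rw [hE]
    rw [List.pairwise_append]
    refine ⟨List.Pairwise.sublist (List.take_sublist b l) hs, ?_, ?_⟩
    · rw [List.pairwise_append]
      refine ⟨?_, List.Pairwise.sublist (List.drop_sublist (b+1) l) hs, ?_⟩
      · rw [hM]; split <;> simp
      · intro x hx y hy
        have := hMchar x hx
        have := hDchar y hy
        omega
    · intro x hx y hy
      have hxc := hTchar x hx
      rcases List.mem_append.mp hy with hy | hy
      · have := hMchar y hy; omega
      · have := hDchar y hy; omega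
  have hEpos : ∀ x ∈ E, 0 < x := by
    intro x hx
    rw [hE] at hx
    rcases List.mem_append.mp hx with hx | hx
    · have := hTchar x hx; omega
    rcases List.mem_append.mp hx with hx | hx
    · have := hMchar x hx
      rw [hM] at hx
      split at hx
      · simp at hx
      · rename_i hne; omega
    · exact hDpos x hx
  have hstep : gpStep l i = E := by
    unfold gpStep
    have : l.getD i 0 = c := rfl
    rw [this]
    refine List.Perm.eq_of_pairwise (fun a b _ _ h1 h2 => le_antisymm h2 h1) (List.pairwise_insertionSort _ _) hEsorted ?_
    exact (List.perm_insertionSort _ _).trans hperm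
  -- psum computation
  have hlenT : T.length = b := by rw [hT, List.length_take]; omega
  have hsplit : l = T ++ (c :: D) := by
    conv_lhs => rw [← List.take_append_drop b l]
    rw [List.drop_eq_getElem_cons hblen]
    congr 2
    rw [← List.getD_eq_getElem l 0 hblen]
    exact hvb
  have hpsuml : ∀ k, psum l k = psum T k + psum (c :: D) (k - b) := by
    intro k
    conv_lhs => rw [hsplit]
    rw [psum_append, hlenT]
  have hpsumE : ∀ k, psum E k = psum T k + psum (M ++ D) (k - b) := by
    intro k
    rw [hE, psum_append, hlenT]
  have hDnil : c = 1 → D = [] := by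
    intro hc1
    rw [hD]
    apply List.drop_eq_nil_of_le
    by_contra hcon
    push_neg at hcon
    have := hafter (b+1) (by omega)
    have := val_pos l hp (show b+1 < l.length by omega)
    omega
  have hpsum : ∀ k, psum E k + (if b < k then 1 else 0) = psum l k := by
    intro k
    rw [hpsuml, hpsumE]
    rcases Nat.lt_or_ge b k with hk | hk
    · rw [if_pos hk]
      have hkb : k - b = (k - b - 1) + 1 := by omega
      rw [hkb, psum_cons]
      by_cases hc1 : c = 1
      · rw [hM, if_pos hc1, hDnil hc1, hc1]
        simp [psum_nil]
      · rw [hM, if_neg hc1]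
        have : ([c-1] ++ D) = (c-1) :: D := rfl
        rw [this, psum_cons]
        omega
    · rw [if_neg (by omega), show k - b = 0 from by omega, psum_zero, psum_zero]
  have hlenE : E.length ≤ l.length := by
    rw [hE, List.length_append, List.length_append, hlenT, hD, List.length_drop, hM]
    split <;> simp <;> omega
  have hsum : E.sum + 1 = l.sum := by
    have h1 := hpsum l.length
    rw [psum_of_len_le l (le_refl _), psum_of_len_le E hlenE, if_pos hblen] at h1
    omega
  rw [hstep]
  exact ⟨b, hib, hblen, hblock, hafter, hEsorted, hEpos, hsum, hpsum⟩

/-- Dominance is preserved by removing a box at the same row from both partitions. -/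
lemma dom_step (ν τ : List ℕ) (hsν : ν.Pairwise (· ≥ ·)) (hpν : ∀ x ∈ ν, 0 < x)
    (hsτ : τ.Pairwise (· ≥ ·)) (hpτ : ∀ x ∈ τ, 0 < x)
    (hsum : ν.sum = τ.sum) (hdom : ∀ k, psum ν k ≤ psum τ k)
    {i : ℕ} (hiν : i < ν.length) (hiτ : i < τ.length) :
    ∀ k, psum (gpStep ν i) k ≤ psum (gpStep τ i) k := by
  obtain ⟨bν, hibν, hbνlen, hblockν, hafterν, _, _, _, hpsν⟩ := step_spec ν hsν hpν hiν
  obtain ⟨bτ, hibτ, hbτlen, hblockτ, hafterτ, _, _, _, hpsτ⟩ := step_spec τ hsτ hpτ hiτ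
  intro k
  have h1 := hpsν k
  have h2 := hpsτ k
  have hdk := hdom k
  by_cases hbad : bτ < k ∧ k ≤ bν
  · -- bad region: show strict inequality psum ν k < psum τ k
    obtain ⟨hk1, hk2⟩ := hbad
    have hstrict : psum ν k < psum τ k := by
      rcases lt_or_eq_of_le hdk with h | heq
      · exact h
      exfalso
      set c := val ν i with hc
      set d := val τ i with hd
      have hcpos : 0 < c := val_pos ν hpν hiν
      have hik : i < k := by omega
      -- psum ν k = psum ν i + (k-i)*c
      have e1 : psum ν k = psum ν i + (k-i) * c := by
        have := psum_block_exact ν i (k-i) c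
          (fun j hj1 hj2 => hblockν j hj1 (by omega))
        rw [show i + (k-i) = k by omega] at this
        exact this
      have hνk : val ν k = c := hblockν k (by omega) hk2
      have e2 : psum ν (k+1) = psum ν k + c := by rw [psum_succ, hνk]
      rcases lt_or_ge (val τ k) c with hA | hB
      · -- case A
        have e3 : psum τ (k+1) = psum τ k + val τ k := psum_succ τ k
        have := hdom (k+1)
        omega
      · -- case B : val τ k ≥ c
        have hdgt : val τ k < d := hafterτ k hk1
        have e4 : psum τ i + d = psum τ (i+1) := by rw [psum_succ, hd]
        have e5 : psum τ (i+1) + (k-1-i) * c ≤ psum τ k := by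
          have := psum_block_lower τ (i+1) (k-1-i) c
            (fun j hj1 hj2 => le_trans hB (val_anti τ hsτ (by omega)))
          rw [show (i+1) + (k-1-i) = k by omega] at this
          exact this
        have e6 : (k-i) * c = (k-1-i) * c + c := by
          rw [show k-i = (k-1-i)+1 by omega]; ring
        have := hdom i
        omega
    rw [if_neg (show ¬ bν < k by omega)] at h1
    rw [if_pos hk1] at h2
    omega
  · -- good regions: omega from the indicator comparison
    push_neg at hbad
    rcases Nat.lt_or_ge bτ k with h | h
    · have := hbad h
      split_ifs at h1 h2 <;> omega
    · split_ifs at h1 h2 <;> omega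

/-- Removing a box from row 0 gives the dominance-smallest single-box removal. -/
lemma dom_step_zero (l : List ℕ) (hs : l.Pairwise (· ≥ ·)) (hp : ∀ x ∈ l, 0 < x)
    {i : ℕ} (hi : i < l.length) :
    ∀ k, psum (gpStep l 0) k ≤ psum (gpStep l i) k := by
  have h0 : 0 < l.length := by omega
  obtain ⟨b0, _, hb0len, hblock0, hafter0, _, _, _, hps0⟩ := step_spec l hs hp h0
  obtain ⟨bi, hibi, hbilen, hblocki, hafteri, _, _, _, hpsi⟩ := step_spec l hs hp hi
  have hble : b0 ≤ bi := by
    by_contra hcon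
    push_neg at hcon
    -- bi < b0, so i ≤ bi < b0, val l b0 = val l 0 and val l b0 < val l i ≤ val l 0
    have h1 : val l b0 = val l 0 := hblock0 b0 (by omega) (le_refl _)
    have h2 : val l b0 < val l i := hafteri b0 hcon
    have h3 : val l i ≤ val l 0 := val_anti l hs (by omega)
    omega
  intro k
  have h1 := hps0 k
  have h2 := hpsi k
  split_ifs at h1 h2 <;> omega

/-- `gpAux` is antitone in the dominance order (for fixed size). -/
lemma gpAux_antitone : ∀ (N : ℕ) (ν τ : List ℕ), ν.Pairwise (· ≥ ·) → (∀ x ∈ ν, 0 < x) →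
    τ.Pairwise (· ≥ ·) → (∀ x ∈ τ, 0 < x) → ν.sum = N → τ.sum = N →
    (∀ k, psum ν k ≤ psum τ k) → gpAux N τ ⊆ gpAux N ν := by
  intro N
  induction N with
  | zero => intro ν τ _ _ _ _ _ _ _; rw [gpAux, gpAux]
  | succ N ih =>
    intro ν τ hsν hpν hsτ hpτ hsumν hsumτ hdom p hmem
    rw [gpAux] at hmem ⊢
    simp only [Set.mem_iUnion, Set.mem_image, Finset.mem_range] at hmem ⊢
    obtain ⟨i, hiτ, q, hq, rfl⟩ := hmem
    have hiν : i < ν.length := by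
      apply lt_len_of_psum_lt
      calc psum ν i ≤ psum τ i := hdom i
        _ < τ.sum := psum_lt_sum τ hpτ hiτ
        _ = ν.sum := by omega
    refine ⟨i, hiν, q, ?_, rfl⟩
    obtain ⟨bν, _, _, _, _, hsν', hpν', hsumν', _⟩ := step_spec ν hsν hpν hiν
    obtain ⟨bτ, _, _, _, _, hsτ', hpτ', hsumτ', _⟩ := step_spec τ hsτ hpτ hiτ
    exact ih (gpStep ν i) (gpStep τ i) hsν' hpν' hsτ' hpτ'
      (by omega) (by omega)
      (dom_step ν τ hsν hpν hsτ hpτ (by omega) hdom hiν hiτ) hq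

lemma psum_congr {l l' : List ℕ} (h : ∀ j, val l j = val l' j) (k : ℕ) :
    psum l k = psum l' k := by
  induction k with
  | zero => rw [psum_zero, psum_zero]
  | succ k ih => rw [psum_succ, psum_succ, ih, h k]

lemma sum_eq_of_val_eq {l l' : List ℕ} (h : ∀ j, val l j = val l' j) :
    l.sum = l'.sum := by
  have hK := psum_congr h (max l.length l'.length)
  rw [psum_of_len_le l (le_max_left _ _), psum_of_len_le l' (le_max_right _ _)] at hK
  exact hK

lemma psum_le_of_val_le {l l' : List ℕ} (h : ∀ j, val l j ≤ val l' j) (k : ℕ) :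
    psum l k ≤ psum l' k := by
  induction k with
  | zero => rw [psum_zero, psum_zero]
  | succ k ih => rw [psum_succ, psum_succ]; have := h k; omega

lemma psum_lt_of_val_le {l l' : List ℕ} (h : ∀ j, val l j ≤ val l' j)
    {j : ℕ} (hj : val l j < val l' j) {k : ℕ} (hk : j < k) : psum l k < psum l' k := by
  have h1 : psum l (j+1) < psum l' (j+1) := by
    rw [psum_succ, psum_succ]
    have := psum_le_of_val_le h j
    omega
  induction k with
  | zero => omega
  | succ k ih =>
      rcases Nat.lt_or_ge j k with h2 | h2
      · have := ih h2
        rw [psum_succ, psum_succ]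
        have := h k
        omega
      · have : j = k := by omega
        subst this
        exact h1

lemma val_eq_of_sum_eq {l l' : List ℕ} (h : ∀ j, val l j ≤ val l' j)
    (hsum : l.sum = l'.sum) : ∀ j, val l j = val l' j := by
  by_contra hcon
  push_neg at hcon
  obtain ⟨j, hj⟩ := hcon
  have hj' : val l j < val l' j := lt_of_le_of_ne (h j) hj
  set K := max (max l.length l'.length) (j+1) with hK
  have := psum_lt_of_val_le h hj' (show j < K by omega)
  rw [psum_of_len_le l (by omega), psum_of_len_le l' (by omega)] at this
  omega

lemma eq_of_val_eq {l l' : List ℕ} (hpl : ∀ x ∈ l, 0 < x) (hpl' : ∀ x ∈ l', 0 < x)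
    (h : ∀ j, val l j = val l' j) : l = l' := by
  have hlen : l.length = l'.length := by
    by_contra hcon
    rcases Nat.lt_or_ge l.length l'.length with hc | hc
    · have h1 := val_pos l' hpl' hc
      have h2 := val_of_len_le l (le_refl l.length)
      rw [h l.length] at h2
      omega
    · have hc' : l'.length < l.length := by omega
      have h1 := val_pos l hpl hc'
      have h2 := val_of_len_le l' (le_refl l'.length)
      rw [← h l'.length] at h2
      omega
  apply List.ext_getElem hlen
  intro i h1 h2
  have := h i
  rw [val, val, List.getD_eq_getElem _ _ h1, List.getD_eq_getElem _ _ h2] at this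
  exact this

lemma exists_max_row {l l' : List ℕ} (hsub : ∀ j, val l j ≤ val l' j)
    (hex : ∃ j, val l j < val l' j) :
    ∃ i, i < l'.length ∧ val l i < val l' i ∧ ∀ j, i < j → val l j = val l' j := by
  classical
  set S := (Finset.range l'.length).filter (fun j => val l j < val l' j) with hS
  have hne : S.Nonempty := by
    obtain ⟨j, hj⟩ := hex
    refine ⟨j, ?_⟩
    simp only [hS, Finset.mem_filter, Finset.mem_range]
    exact ⟨lt_len_of_val_pos l' (by omega), hj⟩
  have hmem := S.max'_mem hne
  simp only [hS, Finset.mem_filter, Finset.mem_range] at hmem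
  refine ⟨S.max' hne, hmem.1, hmem.2, ?_⟩
  intro j hj
  rcases Nat.lt_or_ge j l'.length with hc | hc
  · by_contra hcon
    have hjlt : val l j < val l' j := lt_of_le_of_ne (hsub j) hcon
    have : j ∈ S := by
      simp only [hS, Finset.mem_filter, Finset.mem_range]; exact ⟨hc, hjlt⟩
    have := S.le_max' j this
    omega
  · have h1 := val_of_len_le l' hc
    have := hsub j
    omega

lemma main_aux : ∀ (n : ℕ), ∀ (m : ℕ) (l l' : List ℕ), m ≤ n →
    IsPartitionOf m l → IsPartitionOf n l' → (∀ i : ℕ, l.getD i 0 ≤ l'.getD i 0) →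
    gpBasis l ⊆ gpBasis l' := by
  intro n
  induction n using Nat.strong_induction_on with
  | _ n ih =>
  intro m l l' hmn ⟨hsl, hpl, hsuml⟩ ⟨hsl', hpl', hsuml'⟩ hsub
  have hsub' : ∀ i, val l i ≤ val l' i := hsub
  rcases eq_or_lt_of_le hmn with heq | hlt
  · -- equal sums : the lists are equal
    have hveq := val_eq_of_sum_eq hsub' (by omega)
    rw [eq_of_val_eq hpl hpl' hveq]
  · -- m < n
    obtain ⟨N, rfl⟩ : ∃ N, n = N + 1 := ⟨n - 1, by omega⟩
    -- find the largest row where l' strictly exceeds l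
    have hex : ∃ j, val l j < val l' j := by
      by_contra hcon
      push_neg at hcon
      have : ∀ j, val l j = val l' j := fun j => le_antisymm (hsub' j) (hcon j)
      have := sum_eq_of_val_eq this
      omega
    obtain ⟨i, hilen, hvi, hmax⟩ := exists_max_row hsub' hex
    obtain ⟨b, hib, hblen, hblock, hafter, hs'', hp'', hsum'', hps⟩ :=
      step_spec l' hsl' hpl' hilen
    have hbi : b = i := by
      by_contra hcon
      have h1 : val l' (i+1) = val l' i := hblock (i+1) (by omega) (by omega)
      have h2 : val l (i+1) = val l' (i+1) := hmax (i+1) (by omega)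
      have h3 : val l (i+1) ≤ val l i := val_anti l hsl (by omega)
      omega
    rw [hbi] at hps
    have hval'' : ∀ j, val (gpStep l' i) j + (if j = i then 1 else 0) = val l' j := by
      intro j
      have b1 : psum (gpStep l' i) (j+1) = psum (gpStep l' i) j + val (gpStep l' i) j := psum_succ _ _
      have b2 : psum l' (j+1) = psum l' j + val l' j := psum_succ _ _
      have a1 := hps (j+1)
      have a2 := hps j
      split_ifs at a1 a2 ⊢ <;> omega
    have hsub'' : ∀ j, val l j ≤ val (gpStep l' i) j := by
      intro j
      have h1 := hval'' j
      by_cases hji : j = i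
      · subst hji; rw [if_pos rfl] at h1; omega
      · rw [if_neg hji] at h1; have := hsub' j; omega
    have hsum''' : (gpStep l' i).sum = N := by omega
    have step1 : gpBasis l ⊆ gpBasis (gpStep l' i) :=
      ih N (by omega) m l (gpStep l' i) (by omega) ⟨hsl, hpl, hsuml⟩ ⟨hs'', hp'', hsum'''⟩ hsub''
    have h0len : 0 < l'.length := by omega
    obtain ⟨b0, _, _, _, _, hs0, hp0, hsum0, _⟩ := step_spec l' hsl' hpl' h0len
    have hsum0' : (gpStep l' 0).sum = N := by omega
    have step2 : gpBasis (gpStep l' i) ⊆ gpBasis (gpStep l' 0) := by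
      unfold gpBasis
      rw [hsum''', hsum0']
      exact gpAux_antitone N (gpStep l' 0) (gpStep l' i) hs0 hp0 hs'' hp'' hsum0' hsum'''
        (dom_step_zero l' hsl' hpl' hilen)
    have step3 : gpBasis (gpStep l' 0) ⊆ gpBasis l' := by
      unfold gpBasis
      rw [hsum0', hsuml', gpAux]
      intro p hp
      simp only [Set.mem_iUnion, Set.mem_image, Finset.mem_range]
      exact ⟨0, h0len, p, hp, by rw [pow_zero, one_mul]⟩
    exact fun x hx => step3 (step2 (step1 hx))

end GP

/-- If `λ ⊆ λ'` as Young diagrams then `B(λ) ⊆ B(λ')`. -/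
theorem stmt7 (m n : ℕ) (hmn : m ≤ n) (l l' : List ℕ)
    (hl : IsPartitionOf m l) (hl' : IsPartitionOf n l')
    (hsub : ∀ i : ℕ, l.getD i 0 ≤ l'.getD i 0) :
    gpBasis l ⊆ gpBasis l' :=
  GP.main_aux n m l l' hmn hl hl' hsub
end

section
/- For i ∈ {1,2,3,4} and n ≥ i, the number of tuples (d_2,...,d_n) of nonnegative integers with d_2 + ⋯ + d_n = i and d_k ≤ k−1 for all k equals C(n−2+i, i) − C(n−3+i, i−2). -/
def g (m i : ℕ) : ℕ :=
  ((Fintype.piFinset (fun k : Fin m => Finset.range ((k : ℕ) + 2))).filter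
      (fun d => ∑ k, d k = i)).card

lemma g_rec (m i : ℕ) (h : i ≤ m + 1) :
    g (m + 1) i = ∑ a ∈ Finset.range (i + 1), g m (i - a) := by
  classical
  unfold g
  rw [Finset.card_eq_sum_card_fiberwise (f := fun d => d (Fin.last m))
      (t := Finset.range (i + 1)) ?ht]
  case ht =>
    intro d hd
    simp only [Finset.mem_coe, Finset.mem_filter] at hd
    have : d (Fin.last m) ≤ i := by
      rw [← hd.2]
      exact Finset.single_le_sum (f := fun k => d k) (fun _ _ => Nat.zero_le _)
        (Finset.mem_univ _)
    simp only [Finset.mem_coe, Finset.mem_range]; omega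
  refine Finset.sum_congr rfl fun a ha => ?_
  simp only [Finset.mem_range] at ha
  refine Finset.card_bij' (fun d _ => Fin.init d) (fun d' _ => Fin.snoc d' a)
    ?hi ?hj ?li ?ri
  case hi =>
    intro d hd
    simp only [Finset.mem_filter, Fintype.mem_piFinset, Finset.mem_range] at hd ⊢
    obtain ⟨⟨hmem, hsum⟩, hlast⟩ := hd
    constructor
    · intro k
      have := hmem k.castSucc
      simpa [Fin.init] using this
    · have := Fin.sum_univ_castSucc (f := d)
      simp only [Fin.init]
      omega
  case hj =>
    intro d' hd'
    simp only [Finset.mem_filter, Fintype.mem_piFinset, Finset.mem_range] at hd' ⊢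
    obtain ⟨hmem, hsum⟩ := hd'
    refine ⟨⟨?_, ?_⟩, ?_⟩
    · intro k
      induction k using Fin.lastCases with
      | last => simp only [Fin.snoc_last]; simp; omega
      | cast j => simpa [Fin.snoc_castSucc] using hmem j
    · rw [Fin.sum_univ_castSucc]
      simp only [Fin.snoc_castSucc, Fin.snoc_last, hsum]
      omega
    · simp [Fin.snoc_last]
  case li =>
    intro d hd
    simp only [Finset.mem_filter] at hd
    have h2 := Fin.snoc_init_self d
    rw [hd.2] at h2
    simpa using h2
  case ri =>
    intro d' _
    simp [Fin.init_snoc]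

lemma g_formula : ∀ m i : ℕ, i ≤ 4 → i ≤ m + 1 →
    (g m i : ℤ) = ((m + i - 1).choose i : ℤ) -
      (if 2 ≤ i then ((m + i - 2).choose (i - 2) : ℤ) else 0) := by
  intro m
  induction m with
  | zero =>
    intro i h4 h1
    interval_cases i
    · norm_num [show g 0 0 = 1 from by decide]
    · norm_num [show g 0 1 = 0 from by decide]
  | succ m ih =>
    intro i h4 him
    by_cases h : i ≤ m + 1
    · rw [g_rec m i h]
      have e0 := ih 0 (by norm_num) (by omega)
      have e1' := ih 1 (by norm_num) (by omega)
      simp only [show m + 1 - 1 = m from by omega] at e1'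
      norm_num [Nat.choose_one_right] at e1'
      norm_num at e0
      interval_cases i
      · simp only [Finset.sum_range_succ, Finset.sum_range_zero]
        norm_num [e0]
      · simp only [Finset.sum_range_succ, Finset.sum_range_zero]
        norm_num [Nat.choose_one_right]
        push_cast
        omega
      · have e2 := ih 2 (by norm_num) (by omega)
        simp only [Finset.sum_range_succ, Finset.sum_range_zero,
          show m + 2 - 1 = m + 1 from by omega, show m + 2 - 2 = m from by omega,
          show m + 1 + 2 - 1 = m + 2 from by omega, show m + 1 + 2 - 2 = m + 1 from by omega]
          at e2 ⊢
        norm_num [Nat.choose_one_right, Nat.choose_zero_right] at e2 e1' ⊢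
        have pc : (m + 2).choose 2 = (m + 1).choose 1 + (m + 1).choose 2 :=
          Nat.choose_succ_succ _ _
        push_cast [Nat.choose_one_right] at *
        omega
      · have e3 := ih 3 (by norm_num) (by omega)
        have e2 := ih 2 (by norm_num) (by omega)
        simp only [Finset.sum_range_succ, Finset.sum_range_zero,
          show m + 2 - 1 = m + 1 from by omega, show m + 2 - 2 = m from by omega,
          show m + 3 - 1 = m + 2 from by omega, show m + 3 - 2 = m + 1 from by omega,
          show m + 1 + 3 - 1 = m + 3 from by omega, show m + 1 + 3 - 2 = m + 2 from by omega]
          at e2 e3 ⊢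
        norm_num [Nat.choose_one_right, Nat.choose_zero_right] at e2 e3 e1' ⊢
        have pb : (m + 3).choose 3 = (m + 2).choose 2 + (m + 2).choose 3 :=
          Nat.choose_succ_succ _ _
        have pc : (m + 2).choose 2 = (m + 1).choose 1 + (m + 1).choose 2 :=
          Nat.choose_succ_succ _ _
        push_cast [Nat.choose_one_right] at *
        omega
      · have e4 := ih 4 (by norm_num) (by omega)
        have e3 := ih 3 (by norm_num) (by omega)
        have e2 := ih 2 (by norm_num) (by omega)
        simp only [Finset.sum_range_succ, Finset.sum_range_zero,
          show m + 2 - 1 = m + 1 from by omega, show m + 2 - 2 = m from by omega,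
          show m + 3 - 1 = m + 2 from by omega, show m + 3 - 2 = m + 1 from by omega,
          show m + 4 - 1 = m + 3 from by omega, show m + 4 - 2 = m + 2 from by omega,
          show m + 1 + 4 - 1 = m + 4 from by omega, show m + 1 + 4 - 2 = m + 3 from by omega]
          at e2 e3 e4 ⊢
        norm_num [Nat.choose_one_right, Nat.choose_zero_right] at e2 e3 e4 e1' ⊢
        have pa : (m + 4).choose 4 = (m + 3).choose 3 + (m + 3).choose 4 :=
          Nat.choose_succ_succ _ _
        have pb : (m + 3).choose 3 = (m + 2).choose 2 + (m + 2).choose 3 :=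
          Nat.choose_succ_succ _ _
        have pc : (m + 2).choose 2 = (m + 1).choose 1 + (m + 1).choose 2 :=
          Nat.choose_succ_succ _ _
        have pd : (m + 3).choose 2 = (m + 2).choose 1 + (m + 2).choose 2 :=
          Nat.choose_succ_succ _ _
        push_cast [Nat.choose_one_right] at *
        omega
    · have hi : i = m + 2 := by omega
      subst hi
      have hm : m ≤ 2 := by omega
      interval_cases m <;> decide

/-- For `i ∈ {1,2,3,4}` and `n ≥ i`, the number of tuples `(d_2,...,d_n)` of nonnegative
integers with `d_2 + ⋯ + d_n = i` and `d_k ≤ k - 1` equals `C(n-2+i, i) - C(n-3+i, i-2)`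
(with the convention `C(a, b) = 0` for `b < 0`). -/
theorem stmt11 (i n : ℕ) (hi : i ∈ ({1, 2, 3, 4} : Finset ℕ)) (hn : i ≤ n) :
    (((Fintype.piFinset (fun k : Fin (n - 1) => Finset.range ((k : ℕ) + 2))).filter
        (fun d => ∑ k, d k = i)).card : ℤ) =
      ((n + i - 2).choose i : ℤ) - (if 2 ≤ i then ((n + i - 3).choose (i - 2) : ℤ) else 0) := by
  have hi4 : i ≤ 4 ∧ 1 ≤ i := by
    simp only [Finset.mem_insert, Finset.mem_singleton] at hi
    omega
  have key := g_formula (n - 1) i hi4.1 (by omega)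
  have h1 : n - 1 + i - 1 = n + i - 2 := by omega
  have h2 : n - 1 + i - 2 = n + i - 3 := by omega
  rw [h1, h2] at key
  exact key
end

section
/- For n ≥ 5, the number of tuples (d_2,...,d_n) of nonnegative integers with d_2 + ⋯ + d_n = 5 and d_k ≤ k−1 for all k equals C(n+3,5) − C(n+2,3) + 1. -/
/-- Count of tuples `d : Fin N → ℕ` with `d k < k + c` and `∑ d k = m`. -/
def BB (c N m : ℕ) : ℕ :=
  ((Fintype.piFinset (fun k : Fin N => Finset.range ((k : ℕ) + c))).filter
      (fun d => ∑ k, d k = m)).card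

lemma BB_zero (c m : ℕ) : BB c 0 m = if m = 0 then 1 else 0 := by
  unfold BB
  rcases eq_or_ne m 0 with rfl | hm
  · rw [if_pos rfl, Finset.card_eq_one]
    refine ⟨fun k => (k.elim0 : ℕ), ?_⟩
    ext f
    simp only [Finset.mem_filter, Fintype.mem_piFinset, Finset.mem_singleton]
    constructor
    · rintro ⟨-, -⟩; funext k; exact k.elim0
    · rintro rfl; exact ⟨fun k => k.elim0, by simp⟩
  · rw [if_neg hm, Finset.card_eq_zero, Finset.filter_eq_empty_iff]
    intro f _
    simp [hm.symm]

lemma BB_rec (c N m : ℕ) :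
    BB c (N + 1) m = ∑ j ∈ Finset.range c, if j ≤ m then BB (c + 1) N (m - j) else 0 := by
  unfold BB
  rw [Finset.card_eq_sum_card_fiberwise (f := fun d => d 0) (t := Finset.range c)
    (by
      intro d hd
      simp only [Finset.mem_coe, Finset.mem_filter, Fintype.mem_piFinset] at hd
      have := hd.1 0
      simpa using this)]
  refine Finset.sum_congr rfl ?_
  intro j hj
  simp only [Finset.mem_range] at hj
  by_cases hjm : j ≤ m
  · rw [if_pos hjm]
    refine Finset.card_nbij' (fun d => Fin.tail d) (fun g => Fin.cons j g) ?_ ?_ ?_ ?_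
    · intro d hd
      simp only [Finset.mem_coe, Finset.mem_filter, Fintype.mem_piFinset, Finset.mem_range] at hd ⊢
      obtain ⟨⟨h1, h2⟩, h3⟩ := hd
      refine ⟨fun k => ?_, ?_⟩
      · have hk := h1 k.succ
        simp only [Finset.mem_range, Fin.val_succ] at hk
        show d k.succ < (k : ℕ) + (c + 1)
        omega
      · have hsum : ∑ k : Fin (N + 1), d k = d 0 + ∑ i : Fin N, d i.succ :=
          Fin.sum_univ_succ d
        have htail : ∑ i : Fin N, Fin.tail d i = ∑ i : Fin N, d i.succ := rfl
        omega
    · intro g hg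
      simp only [Finset.mem_coe, Finset.mem_filter, Fintype.mem_piFinset, Finset.mem_range] at hg ⊢
      obtain ⟨h1, h2⟩ := hg
      refine ⟨⟨fun k => ?_, ?_⟩, ?_⟩
      · rcases Fin.eq_zero_or_eq_succ k with rfl | ⟨i, rfl⟩
        · simpa using hj
        · have hi := h1 i
          simp only [Fin.cons_succ, Fin.val_succ]
          omega
      · rw [Fin.sum_univ_succ]
        simp only [Fin.cons_zero, Fin.cons_succ]
        omega
      · simp
    · intro d hd
      simp only [Finset.mem_coe, Finset.mem_filter] at hd
      have hd0 : d 0 = j := hd.2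
      rw [← hd0]
      exact Fin.cons_self_tail d
    · intro g _
      funext i
      simp [Fin.tail]
  · rw [if_neg hjm, Finset.card_eq_zero, Finset.filter_eq_empty_iff]
    intro d hd
    simp only [Finset.mem_filter, Fintype.mem_piFinset] at hd
    intro hd0
    have hle : d 0 ≤ ∑ k : Fin (N + 1), d k :=
      Finset.single_le_sum (fun k _ => Nat.zero_le (d k)) (Finset.mem_univ 0)
    omega

lemma sum_multichoose (N m : ℕ) :
    ∑ i ∈ Finset.range (m + 1), Nat.multichoose N i = Nat.multichoose (N + 1) m := by
  induction m with
  | zero => simp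
  | succ m ih =>
      rw [Finset.sum_range_succ, ih, Nat.multichoose_succ_succ, Nat.add_comm]

lemma BB_free (N : ℕ) : ∀ c m : ℕ, m < c → BB c N m = Nat.multichoose N m := by
  induction N with
  | zero =>
      intro c m _
      rw [BB_zero]
      rcases m with _ | m <;> simp [Nat.multichoose]
  | succ N ih =>
      intro c m hmc
      rw [BB_rec]
      have hsplit : ∀ j ∈ Finset.range c,
          (if j ≤ m then BB (c + 1) N (m - j) else 0) =
          (if j ≤ m then Nat.multichoose N (m - j) else 0) := by
        intro j _
        by_cases hj : j ≤ m
        · rw [if_pos hj, if_pos hj, ih (c + 1) (m - j) (by omega)]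
        · rw [if_neg hj, if_neg hj]
      rw [Finset.sum_congr rfl hsplit]
      have hrange : ∑ j ∈ Finset.range c, (if j ≤ m then Nat.multichoose N (m - j) else 0) =
          ∑ j ∈ Finset.range (m + 1), Nat.multichoose N (m - j) := by
        rw [← Finset.sum_range_add_sum_Ico _ (Nat.succ_le_of_lt hmc)]
        have h1 : ∑ j ∈ Finset.range (m + 1), (if j ≤ m then Nat.multichoose N (m - j) else 0) =
            ∑ j ∈ Finset.range (m + 1), Nat.multichoose N (m - j) := by
          refine Finset.sum_congr rfl fun j hj => ?_
          rw [if_pos (by simp only [Finset.mem_range] at hj; omega)]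
        have h2 : ∑ j ∈ Finset.Ico (m + 1) c, (if j ≤ m then Nat.multichoose N (m - j) else 0)
            = 0 := by
          refine Finset.sum_eq_zero fun j hj => ?_
          simp only [Finset.mem_Ico] at hj
          rw [if_neg (by omega)]
        rw [h1, h2, Nat.add_zero]
      rw [hrange]
      have hcongr : ∑ j ∈ Finset.range (m + 1), Nat.multichoose N (m - j) =
          ∑ j ∈ Finset.range (m + 1), Nat.multichoose N (m + 1 - 1 - j) := by
        refine Finset.sum_congr rfl fun j _ => ?_
        congr 1
      rw [hcongr, Finset.sum_range_reflect (fun i => Nat.multichoose N i) (m + 1)]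
      exact sum_multichoose N m

/-- The key numeric identity, in `ℕ` to avoid subtraction issues. -/
lemma key_identity (t : ℕ) :
    22 * Nat.multichoose t 0 + 20 * Nat.multichoose t 1 + 15 * Nat.multichoose t 2 +
      9 * Nat.multichoose t 3 + 4 * Nat.multichoose t 4 + Nat.multichoose t 5 +
      (t + 7).choose 3 = (t + 8).choose 5 + 1 := by
  have h0 : Nat.multichoose t 0 = 1 := Nat.multichoose_zero_right t
  have h1 : Nat.multichoose t 1 = t := Nat.multichoose_one_right t
  have h2 : Nat.multichoose t 2 = (t + 1).choose 2 := by
    rw [Nat.multichoose_eq]; congr 1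
  have h3 : Nat.multichoose t 3 = (t + 2).choose 3 := by
    rw [Nat.multichoose_eq]; congr 1
  have h4 : Nat.multichoose t 4 = (t + 3).choose 4 := by
    rw [Nat.multichoose_eq]; congr 1
  have h5 : Nat.multichoose t 5 = (t + 4).choose 5 := by
    rw [Nat.multichoose_eq]; congr 1
  rw [h0, h1, h2, h3, h4, h5]
  rw [Nat.add_choose_eq t 1 2, Nat.add_choose_eq t 2 3, Nat.add_choose_eq t 3 4,
    Nat.add_choose_eq t 4 5, Nat.add_choose_eq t 7 3, Nat.add_choose_eq t 8 5]
  simp only [Finset.Nat.sum_antidiagonal_eq_sum_range_succ_mk, Finset.sum_range_succ,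
    Finset.sum_range_zero]
  norm_num [Nat.choose]
  try ring_nf
  try omega

/-- For `n ≥ 5`, the number of tuples `(d_2,...,d_n)` of nonnegative integers with
`d_2 + ⋯ + d_n = 5` and `d_k ≤ k - 1` equals `C(n+3,5) - C(n+2,3) + 1`. -/
theorem stmt12 (n : ℕ) (hn : 5 ≤ n) :
    (((Fintype.piFinset (fun k : Fin (n - 1) => Finset.range ((k : ℕ) + 2))).filter
        (fun d => ∑ k, d k = 5)).card : ℤ) =
      ((n + 3).choose 5 : ℤ) - ((n + 2).choose 3 : ℤ) + 1 := by
  obtain ⟨t, rfl⟩ : ∃ t, n = t + 5 := ⟨n - 5, by omega⟩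
  show (BB 2 (t + 4) 5 : ℤ) = _
  have hval : BB 2 (t + 4) 5 =
      22 * Nat.multichoose t 0 + 20 * Nat.multichoose t 1 + 15 * Nat.multichoose t 2 +
        9 * Nat.multichoose t 3 + 4 * Nat.multichoose t 4 + Nat.multichoose t 5 := by
    simp only [show t + 4 = (t + 3) + 1 from rfl]
    simp only [BB_rec]
    simp only [Finset.sum_range_succ, Finset.sum_range_zero]
    norm_num
    have e0 : BB 6 t 0 = 1 := by
      rw [BB_free t 6 0 (by norm_num)]; exact Nat.multichoose_zero_right t
    have e1 : BB 6 t 1 = t := by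
      rw [BB_free t 6 1 (by norm_num)]; exact Nat.multichoose_one_right t
    have e2 : BB 6 t 2 = Nat.multichoose t 2 := BB_free t 6 2 (by norm_num)
    have e3 : BB 6 t 3 = Nat.multichoose t 3 := BB_free t 6 3 (by norm_num)
    have e4 : BB 6 t 4 = Nat.multichoose t 4 := BB_free t 6 4 (by norm_num)
    have e5 : BB 6 t 5 = Nat.multichoose t 5 := BB_free t 6 5 (by norm_num)
    rw [e0, e1, e2, e3, e4, e5]
    omega
  rw [hval]
  have hkey := key_identity t
  have h35 : t + 5 + 3 = t + 8 := by omega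
  have h27 : t + 5 + 2 = t + 7 := by omega
  rw [h35, h27]
  push_cast
  omega
end

section
/- For n ≥ 6, the number of tuples (d_2,...,d_n) of nonnegative integers with d_2 + ⋯ + d_n = 6 and d_k ≤ k−1 for all k equals C(n+4,6) − C(n+3,4) + n. -/
set_option maxRecDepth 8000

private def cnt (s n : ℕ) : ℕ :=
  ((Fintype.piFinset (fun k : Fin n => Finset.range ((k : ℕ) + 2))).filter
      (fun d => ∑ k, d k = s)).card

private lemma cnt_succ (s n : ℕ) (hs : s < n + 2) :
    cnt s (n + 1) = ∑ j ∈ Finset.range (s + 1), cnt j n := by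
  unfold cnt
  rw [Finset.card_eq_sum_card_fiberwise
      (f := fun d : Fin (n+1) → ℕ => ∑ k : Fin n, d k.castSucc)
      (t := Finset.range (s + 1)) ?_]
  · refine Finset.sum_congr rfl fun j hj => ?_
    have hjs : j ≤ s := by simpa using Nat.lt_succ_iff.mp (Finset.mem_range.mp hj)
    refine Finset.card_bij' (fun d _ => Fin.init d) (fun e _ => Fin.snoc e (s - j))
      ?_ ?_ ?_ ?_
    · intro d hd
      simp only [Finset.mem_filter, Fintype.mem_piFinset, Finset.mem_range] at hd ⊢
      obtain ⟨⟨hmem, hsum⟩, hfib⟩ := hd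
      refine ⟨fun k => ?_, ?_⟩
      · simpa [Fin.init] using hmem k.castSucc
      · simpa [Fin.init] using hfib
    · intro e he
      simp only [Finset.mem_filter, Fintype.mem_piFinset, Finset.mem_range] at he ⊢
      obtain ⟨hmem, hsum⟩ := he
      refine ⟨⟨fun k => ?_, ?_⟩, ?_⟩
      · refine Fin.lastCases ?_ ?_ k
        · simp only [Fin.snoc_last, Fin.val_last]
          omega
        · intro i
          simpa using hmem i
      · rw [Fin.sum_univ_castSucc]
        simp [hsum]
        omega
      · simp [hsum]
    · intro d hd
      simp only [Finset.mem_filter, Fintype.mem_piFinset, Finset.mem_range] at hd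
      obtain ⟨⟨hmem, hsum⟩, hfib⟩ := hd
      have hlast : d (Fin.last n) = s - j := by
        rw [Fin.sum_univ_castSucc] at hsum
        omega
      rw [← hlast]
      exact Fin.snoc_init_self d
    · intro e he
      simp [Fin.init_snoc]
  · intro d hd
    simp only [Finset.mem_coe, Finset.mem_filter, Fintype.mem_piFinset] at hd ⊢
    obtain ⟨hmem, hsum⟩ := hd
    rw [Finset.mem_range, Nat.lt_succ_iff, ← hsum, Fin.sum_univ_castSucc]
    exact Nat.le_add_right _ _

private lemma cnt_formulas (m : ℕ) :
    ((cnt 0 (m+5) : ℤ) = 1) ∧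
    ((cnt 1 (m+5) : ℤ) = 5 + m) ∧
    ((720:ℤ) * cnt 2 (m+5) = 10080 + 3960*m + 360*m^2) ∧
    ((720:ℤ) * cnt 3 (m+5) = 20880 + 12120*m + 2160*m^2 + 120*m^3) ∧
    ((720:ℤ) * cnt 4 (m+5) = 35280 + 27300*m + 7170*m^2 + 780*m^3 + 30*m^4) ∧
    ((720:ℤ) * cnt 5 (m+5) = 51120 + 50124*m + 17430*m^2 + 2790*m^3 + 210*m^4 + 6*m^5) ∧
    ((720:ℤ) * cnt 6 (m+5) =
      64800 + 79080*m + 34474*m^2 + 7275*m^3 + 805*m^4 + 45*m^5 + m^6) := by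
  induction m with
  | zero =>
    have h0 : cnt 0 5 = 1 := by decide
    have h1 : cnt 1 5 = 5 := by decide
    have h2 : cnt 2 5 = 14 := by decide
    have h3 : cnt 3 5 = 29 := by decide
    have h4 : cnt 4 5 = 49 := by decide
    have h5 : cnt 5 5 = 71 := by decide
    have h6 : cnt 6 5 = 90 := by decide
    refine ⟨?_, ?_, ?_, ?_, ?_, ?_, ?_⟩ <;>
      simp [h0, h1, h2, h3, h4, h5, h6]
  | succ k ih =>
    obtain ⟨h0, h1, h2, h3, h4, h5, h6⟩ := ih
    have e : k + 1 + 5 = (k + 5) + 1 := by ring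
    refine ⟨?_, ?_, ?_, ?_, ?_, ?_, ?_⟩ <;>
      rw [e, cnt_succ _ _ (by omega)] <;>
      push_cast [Finset.sum_range_succ, Finset.sum_range_one]
    · linear_combination h0
    · linear_combination h0 + h1
    · linear_combination 720*h0 + 720*h1 + h2
    · linear_combination 720*h0 + 720*h1 + h2 + h3
    · linear_combination 720*h0 + 720*h1 + h2 + h3 + h4
    · linear_combination 720*h0 + 720*h1 + h2 + h3 + h4 + h5
    · linear_combination 720*h0 + 720*h1 + h2 + h3 + h4 + h5 + h6

/-- For `n ≥ 6`, the number of tuples `(d_2,...,d_n)` of nonnegative integers with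
`d_2 + ⋯ + d_n = 6` and `d_k ≤ k - 1` equals `C(n+4,6) - C(n+3,4) + n`. -/
theorem stmt13 (n : ℕ) (hn : 6 ≤ n) :
    (((Fintype.piFinset (fun k : Fin (n - 1) => Finset.range ((k : ℕ) + 2))).filter
        (fun d => ∑ k, d k = 6)).card : ℤ) =
      ((n + 4).choose 6 : ℤ) - ((n + 3).choose 4 : ℤ) + (n : ℤ) := by
  obtain ⟨m, rfl⟩ : ∃ m, n = m + 6 := ⟨n - 6, by omega⟩
  have key := (cnt_formulas m).2.2.2.2.2.2
  have e1 : m + 6 - 1 = m + 5 := rfl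
  have e2 : m + 6 + 4 = m + 10 := by omega
  have e3 : m + 6 + 3 = m + 9 := by omega
  show ((cnt 6 (m + 6 - 1) : ℤ)) = _
  rw [e1, e2, e3]
  -- choose values as products
  have hc6 : ((m+10).choose 6 : ℤ) * 720 =
      (m+10)*(m+9)*(m+8)*(m+7)*(m+6)*(m+5) := by
    have h := Nat.choose_mul_factorial_mul_factorial (show 6 ≤ m+10 by omega)
    have e4 : m + 10 - 6 = m + 4 := by omega
    rw [e4] at h
    have hfac : (m+10).factorial = (m+10)*((m+9)*((m+8)*((m+7)*((m+6)*((m+5)*(m+4).factorial))))) := rfl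
    rw [hfac] at h
    have h6 : Nat.factorial 6 = 720 := rfl
    rw [h6] at h
    have hp : ((m+4).factorial : ℤ) ≠ 0 := by positivity
    refine mul_right_cancel₀ hp ?_
    have := congrArg (Nat.cast (R := ℤ)) h
    push_cast at this ⊢
    linear_combination this
  have hc4 : ((m+9).choose 4 : ℤ) * 24 = (m+9)*(m+8)*(m+7)*(m+6) := by
    have h := Nat.choose_mul_factorial_mul_factorial (show 4 ≤ m+9 by omega)
    have e4 : m + 9 - 4 = m + 5 := by omega
    rw [e4] at h
    have hfac : (m+9).factorial = (m+9)*((m+8)*((m+7)*((m+6)*(m+5).factorial))) := rfl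
    rw [hfac] at h
    have h4 : Nat.factorial 4 = 24 := rfl
    rw [h4] at h
    have hp : ((m+5).factorial : ℤ) ≠ 0 := by positivity
    refine mul_right_cancel₀ hp ?_
    have := congrArg (Nat.cast (R := ℤ)) h
    push_cast at this ⊢
    linear_combination this
  refine mul_left_cancel₀ (show (720:ℤ) ≠ 0 by norm_num) ?_
  push_cast
  linear_combination key - hc6 + 30*hc4
end

section
/- Let λ be the two-row partition (n−k, k) with n−k ≥ k ≥ 1. Then for each 1 ≤ i ≤ k, the square-free monomial x_2 x_4 x_6 ⋯ x_{2i} belongs to the Garsia-Procesi basis B(λ), and it is the lexicographically minimal monomial of degree i in B(λ): for any other square-free monomial x_{i_1} x_{i_2} ⋯ x_{i_i} ∈ B(λ) with i_1 < i_2 < ⋯ < i_i, one has i_r ≥ 2r for each r. -/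
open MvPolynomial

/- ### Auxiliary lemmas ### -/

lemma gpStep_zero_big (a b : ℕ) (h : 1 ≤ b) (h2 : b + 1 ≤ a) : gpStep [a, b] 0 = [a-1, b] := by
  simp [gpStep, List.insertionSort, List.orderedInsert,
    show a - 1 ≠ 0 by omega, show b ≠ 0 by omega, show b ≤ a - 1 by omega]

lemma gpStep_zero_eq (a : ℕ) (h : 2 ≤ a) : gpStep [a, a] 0 = [a, a-1] := by
  simp [gpStep, List.insertionSort, List.orderedInsert,
    show a - 1 ≠ 0 by omega, show a ≠ 0 by omega, show ¬ (a ≤ a - 1) by omega]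

lemma gpStep_one_big (a b : ℕ) (h : 2 ≤ b) (h2 : b ≤ a) : gpStep [a, b] 1 = [a, b-1] := by
  simp [gpStep, List.insertionSort, List.orderedInsert,
    show b - 1 ≠ 0 by omega, show a ≠ 0 by omega, show b - 1 ≤ a by omega]

lemma gpStep_one_one (a : ℕ) (h2 : 1 ≤ a) : gpStep [a, 1] 1 = [a] := by
  simp [gpStep, List.insertionSort, List.orderedInsert, show a ≠ 0 by omega]

lemma gpStep_oneone : gpStep [1, 1] 0 = [1] := by decide

lemma gpStep_single (a : ℕ) (h : 2 ≤ a) : gpStep [a] 0 = [a - 1] := by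
  simp [gpStep, List.insertionSort, show a - 1 ≠ 0 by omega]

lemma gpStep_single_one : gpStep [1] 0 = [] := by decide

lemma gpAux_mem_succ {n : ℕ} {l : List ℕ} {p : MvPolynomial ℕ ℚ} (h : p ∈ gpAux (n+1) l) :
    ∃ i < l.length, ∃ q ∈ gpAux n (gpStep l i), (X (n + 1) : MvPolynomial ℕ ℚ) ^ i * q = p := by
  simpa [gpAux, Set.mem_iUnion] using h

lemma gpAux_mem_succ' {n : ℕ} {l : List ℕ} {q : MvPolynomial ℕ ℚ} {i : ℕ} (hi : i < l.length)
    (h : q ∈ gpAux n (gpStep l i)) : (X (n + 1) : MvPolynomial ℕ ℚ) ^ i * q ∈ gpAux (n+1) l := by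
  simp only [gpAux, Set.mem_iUnion]
  exact ⟨i, Finset.mem_range.mpr hi, q, h, rfl⟩

lemma gpAux_single : ∀ a : ℕ, gpAux a [a] = {1} := by
  intro a
  induction a with
  | zero => rfl
  | succ n ih =>
    ext p
    simp only [gpAux, Set.mem_iUnion]
    constructor
    · rintro ⟨i, hi, q, hq, rfl⟩
      simp only [List.length_singleton, Finset.mem_range, Nat.lt_one_iff] at hi
      subst hi
      rcases Nat.eq_zero_or_pos n with h0 | h0
      · subst h0
        simp only [gpAux, Set.mem_singleton_iff] at hq
        simp [hq]
      · rw [gpStep_single (n+1) (by omega), Nat.add_sub_cancel, ih] at hq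
        simp only [Set.mem_singleton_iff] at hq
        simp [hq]
    · rintro rfl
      refine ⟨0, by simp, 1, ?_, by simp⟩
      rcases Nat.eq_zero_or_pos n with h0 | h0
      · subst h0; simp [gpStep_single_one, gpAux]
      · rw [gpStep_single (n+1) (by omega), Nat.add_sub_cancel, ih]; rfl

def GPGood (m b : ℕ) (s : Finset ℕ) : Prop :=
  s ⊆ Finset.Icc 1 m ∧ s.card ≤ b ∧ ∀ t, 2 * (s.filter (· ≤ t)).card ≤ t

lemma GPGood.mono {m m' b b' : ℕ} {s : Finset ℕ} (h : GPGood m b s) (hm : m ≤ m') (hb : b ≤ b') :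
    GPGood m' b' s :=
  ⟨h.1.trans (Finset.Icc_subset_Icc le_rfl hm), h.2.1.trans hb, h.2.2⟩

lemma GPGood.empty (m b : ℕ) : GPGood m b ∅ := by
  refine ⟨by simp, by simp, fun t => by simp⟩

lemma gp_fwd : ∀ m : ℕ, ∀ a b : ℕ, 1 ≤ b → b ≤ a → a + b = m →
    ∀ p ∈ gpAux m [a, b], ∃ s : Finset ℕ, GPGood m b s ∧ p = ∏ x ∈ s, X x := by
  intro m
  induction m using Nat.strong_induction_on with
  | _ m IH =>
  intro a b hb hba hm p hp
  obtain ⟨n, rfl⟩ : ∃ n, m = n + 1 := ⟨m - 1, by omega⟩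
  obtain ⟨i, hi, q, hq, rfl⟩ := gpAux_mem_succ hp
  have hi2 : i = 0 ∨ i = 1 := by simp at hi; omega
  rcases hi2 with rfl | rfl
  · -- branch 0 : delete from first row
    rw [pow_zero, one_mul]
    rcases Nat.lt_or_ge b a with hlt | hge
    · -- a > b
      rw [gpStep_zero_big a b hb hlt] at hq
      obtain ⟨s, hs, rfl⟩ := IH n (by omega) (a-1) b hb (by omega) (by omega) q hq
      exact ⟨s, hs.mono (by omega) le_rfl, rfl⟩
    · -- a = b
      have hab : a = b := le_antisymm hge hba
      subst hab
      rcases Nat.lt_or_ge a 2 with h1 | h2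
      · -- a = b = 1
        have ha1 : a = 1 := by omega
        subst ha1
        rw [gpStep_oneone, show n = 1 by omega, gpAux_single] at hq
        simp only [Set.mem_singleton_iff] at hq
        exact ⟨∅, GPGood.empty _ _, by simp [hq]⟩
      · rw [gpStep_zero_eq a h2] at hq
        obtain ⟨s, hs, rfl⟩ := IH n (by omega) a (a-1) (by omega) (by omega) (by omega) q hq
        exact ⟨s, hs.mono (by omega) (by omega), rfl⟩
  · -- branch 1 : delete from second row, gain X (n+1)
    rw [pow_one]
    rcases Nat.lt_or_ge b 2 with h1 | h2
    · have hb1 : b = 1 := by omega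
      subst hb1
      rw [gpStep_one_one a (by omega), show n = a by omega, gpAux_single] at hq
      simp only [Set.mem_singleton_iff] at hq
      subst hq
      refine ⟨{n+1}, ⟨by simp, by simp, fun t => ?_⟩, by simp⟩
      rcases Nat.lt_or_ge t (n+1) with ht | ht
      · rw [Finset.filter_singleton, if_neg (by omega)]; simp
      · rw [Finset.filter_singleton, if_pos (by omega)]; simp; omega
    · rw [gpStep_one_big a b h2 hba] at hq
      obtain ⟨s, hs, rfl⟩ := IH n (by omega) a (b-1) (by omega) (by omega) (by omega) q hq
      have hnot : n + 1 ∉ s := fun hmem => by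
        have := hs.1 hmem; simp [Finset.mem_Icc] at this
      refine ⟨insert (n+1) s, ⟨?_, ?_, fun t => ?_⟩, ?_⟩
      · intro x hx
        rcases Finset.mem_insert.mp hx with rfl | hx
        · exact Finset.mem_Icc.mpr ⟨by omega, le_rfl⟩
        · have h3 := Finset.mem_Icc.mp (hs.1 hx)
          exact Finset.mem_Icc.mpr ⟨h3.1, by omega⟩
      · rw [Finset.card_insert_of_notMem hnot]; have hc := hs.2.1; omega
      · rw [Finset.filter_insert]
        split
        · have hcard : ((insert (n+1) (s.filter (· ≤ t))).card) ≤ s.card + 1 := by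
            refine le_trans (Finset.card_insert_le _ _) ?_
            have := Finset.card_filter_le s (· ≤ t); omega
          have := hs.2.1
          omega
        · exact hs.2.2 t
      · rw [Finset.prod_insert hnot]

lemma gp_mem : ∀ m a b i : ℕ, 1 ≤ b → b ≤ a → a + b = m → i ≤ b →
    (∏ r ∈ Finset.range i, (X (2*(r+1)) : MvPolynomial ℕ ℚ)) ∈ gpAux m [a, b] := by
  intro m
  induction m using Nat.strong_induction_on with
  | _ m IH =>
  intro a b i hb hba hm hib
  obtain ⟨n, rfl⟩ : ∃ n, m = n + 1 := ⟨m - 1, by omega⟩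
  rcases Nat.lt_or_ge b a with hlt | hge
  · -- a > b : delete from first row, no factor
    have h := gpAux_mem_succ' (n := n) (l := [a,b]) (q := ∏ r ∈ Finset.range i, (X (2*(r+1)) : MvPolynomial ℕ ℚ)) (i := 0) (by simp)
    rw [pow_zero, one_mul, gpStep_zero_big a b hb hlt] at h
    exact h (IH n (by omega) (a-1) b i hb (by omega) (by omega) hib)
  · have hab : a = b := le_antisymm hge hba
    subst hab
    rcases Nat.eq_or_lt_of_le hib with hieq | hilt
    · -- i = b : delete from second row, factor X (n+1) = X (2b)
      subst hieq
      have h2i : 2 * i = n + 1 := by omega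
      have hsplit : (∏ r ∈ Finset.range i, (X (2*(r+1)) : MvPolynomial ℕ ℚ))
          = (X (n+1) : MvPolynomial ℕ ℚ) ^ 1 * ∏ r ∈ Finset.range (i-1), (X (2*(r+1)) : MvPolynomial ℕ ℚ) := by
        rw [pow_one, mul_comm]
        have : i = (i - 1) + 1 := by omega
        rw [this, Finset.prod_range_succ]
        congr 2
        omega
      rw [hsplit]
      rcases Nat.lt_or_ge i 2 with h1 | h2
      · have : i = 1 := by omega
        subst this
        refine gpAux_mem_succ' (by simp) ?_
        rw [gpStep_one_one 1 le_rfl, show n = 1 by omega, gpAux_single]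
        simp
      · refine gpAux_mem_succ' (by simp) ?_
        rw [gpStep_one_big i i h2 le_rfl]
        exact IH n (by omega) i (i-1) (i-1) (by omega) (by omega) (by omega) le_rfl
    · -- i < b : delete from first row
      have h := gpAux_mem_succ' (n := n) (l := [a,a]) (q := ∏ r ∈ Finset.range i, (X (2*(r+1)) : MvPolynomial ℕ ℚ)) (i := 0) (by simp)
      rw [pow_zero, one_mul] at h
      rcases Nat.lt_or_ge a 2 with h1 | h2
      · have hb1 : a = 1 := by omega
        subst hb1
        have hn : n = 1 := by omega
        subst hn
        have hi0 : i = 0 := by omega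
        subst hi0
        rw [gpStep_oneone, gpAux_single] at h
        exact h (by simp)
      · rw [gpStep_zero_eq a h2] at h
        exact h (IH n (by omega) a (a-1) i (by omega) (by omega) (by omega) (by omega))

lemma prod_X_eq (s : Finset ℕ) : ∏ x ∈ s, (X x : MvPolynomial ℕ ℚ)
    = monomial (∑ x ∈ s, Finsupp.single x 1) 1 := by
  induction s using Finset.induction with
  | empty => simp
  | insert _ _ h ih => rw [Finset.prod_insert h, ih, X, monomial_mul, Finset.sum_insert h]; simp

lemma prod_X_inj {s t : Finset ℕ}
    (h : ∏ x ∈ s, (X x : MvPolynomial ℕ ℚ) = ∏ x ∈ t, X x) : s = t := by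
  rw [prod_X_eq, prod_X_eq] at h
  have hd : (∑ x ∈ s, Finsupp.single x 1) = ∑ x ∈ t, Finsupp.single x (1 : ℕ) := by
    rcases (MvPolynomial.monomial_eq_monomial_iff _ _ _ _).mp h with ⟨h1, _⟩ | ⟨h1, _⟩
    · exact h1
    · norm_num at h1
  ext y
  have := DFunLike.congr_fun hd y
  simp only [Finsupp.finset_sum_apply, Finsupp.single_apply] at this
  rw [Finset.sum_ite_eq' s y (fun _ => 1), Finset.sum_ite_eq' t y (fun _ => 1)] at this
  by_cases hy1 : y ∈ s <;> by_cases hy2 : y ∈ t <;> simp_all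

/-- For the two-row partition `λ = (n-k, k)` with `n-k ≥ k ≥ 1` and each `1 ≤ i ≤ k`:
the monomial `x_2 x_4 ⋯ x_{2i}` belongs to `B(λ)`, and any square-free monomial
`x_{i_1} ⋯ x_{i_i} ∈ B(λ)` with `i_1 < ⋯ < i_i` satisfies `i_r ≥ 2r` for each `r`. -/
theorem stmt15 (n k : ℕ) (hk : 1 ≤ k) (hkn : k ≤ n) (htworow : k ≤ n - k) :
    ∀ i : ℕ, 1 ≤ i → i ≤ k →
      ((∏ r ∈ Finset.range i, (X (2 * (r + 1)) : MvPolynomial ℕ ℚ)) ∈ gpBasis [n - k, k]) ∧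
      (∀ c : Fin i → ℕ, StrictMono c →
        (∏ r : Fin i, (X (c r) : MvPolynomial ℕ ℚ)) ∈ gpBasis [n - k, k] →
        ∀ r : Fin i, 2 * ((r : ℕ) + 1) ≤ c r) := by
  intro i hi hik
  have hsum : [n - k, k].sum = (n - k) + k := by simp
  constructor
  · show _ ∈ gpAux ([n-k,k].sum) [n-k,k]
    rw [hsum]
    exact gp_mem _ (n-k) k i hk htworow rfl hik
  · intro c hc hmem r
    rw [show gpBasis [n-k,k] = gpAux ((n-k)+k) [n-k,k] by rw [gpBasis, hsum]] at hmem
    obtain ⟨s, hgood, heq⟩ := gp_fwd _ (n-k) k hk htworow rfl _ hmem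
    have himg : (∏ r : Fin i, (X (c r) : MvPolynomial ℕ ℚ)) = ∏ x ∈ Finset.univ.image c, X x :=
      (Finset.prod_image (fun x _ y _ h => hc.injective h)).symm
    have hseq : Finset.univ.image c = s := prod_X_inj (by rw [← himg, heq])
    have hsub : (Finset.Iic r).image c ⊆ s.filter (· ≤ c r) := by
      intro x hx
      obtain ⟨r', hr', rfl⟩ := Finset.mem_image.mp hx
      refine Finset.mem_filter.mpr ⟨?_, ?_⟩
      · rw [← hseq]; exact Finset.mem_image_of_mem c (Finset.mem_univ r')
      · exact hc.monotone (Finset.mem_Iic.mp hr')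
    have hcard : (r : ℕ) + 1 ≤ (s.filter (· ≤ c r)).card := by
      have h1 : ((Finset.Iic r).image c).card = (r : ℕ) + 1 := by
        rw [Finset.card_image_of_injective _ hc.injective, Fin.card_Iic]
      rw [← h1]
      exact Finset.card_le_card hsub
    have := hgood.2.2 (c r)
    omega
end
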